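/- arXiv:1907.02388 — 5 statements merged into one kernel-verified Lean document; each statement's English description precedes it below -/
import Mathlib

section
/- Let G be a second-countable locally compact Hausdorff group and let (α,𝔲): G ↷ A, (β,𝔳): G ↷ B, (γ,𝔴): G ↷ C be twisted actions on unital C*-algebras. If (φ,u): (A,α,𝔲) → (B,β,𝔳) and (ψ,v): (B,β,𝔳) → (C,γ,𝔴) are cocycle morphisms, then the pair (ψ∘φ, g ↦ ψ⁺(u_g)·v_g) is a cocycle morphism from (A,α,𝔲) to (C,γ,𝔴). Moreover this composition is associative: for a fourth twisted action (δ,𝔵): G ↷ D on a unital C*-algebra and a cocycle morphism (θ,w): (C,γ,𝔴) → (D,δ,𝔵), one has (θ,w)∘((ψ,v)∘(φ,u)) = ((θ,w)∘(ψ,v))∘(φ,u). -/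
/-!
Common definitions: twisted actions of a locally compact group on a unital C*-algebra,
cocycle morphisms between them, and (approximate/asymptotic) unitary equivalence.
-/

noncomputable section

/-- `φ⁺(w) = φ(w) + 1 - φ(1)` for a (not necessarily unital) *-homomorphism between unital
C*-algebras. -/
def plusMap {A B : Type*} [CStarAlgebra A] [CStarAlgebra B] (φ : A →⋆ₙₐ[ℂ] B) (w : A) : B :=
  φ w + 1 - φ 1

/-- A twisted action `(α, 𝔲) : G ↷ A` of a topological group on a unital C*-algebra:
a point-norm continuous map `α : G → Aut(A)` and a norm-continuous map
`𝔲 : G × G → U(A)` satisfying the twisted action identities. -/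
structure TwistedAction (G A : Type*) [Group G] [TopologicalSpace G] [CStarAlgebra A] where
  α : G → (A ≃⋆ₐ[ℂ] A)
  α_cont : ∀ a : A, Continuous fun g => α g a
  u : G → G → A
  u_mem : ∀ s t, u s t ∈ unitary A
  u_cont : Continuous fun p : G × G => u p.1 p.2
  α_one : ∀ a : A, α 1 a = a
  α_mul : ∀ s t : G, ∀ a : A, α s (α t a) = u s t * α (s * t) a * star (u s t)
  u_one_left : ∀ s, u 1 s = 1
  u_one_right : ∀ s, u s 1 = 1
  u_cocycle : ∀ r s t : G, α r (u s t) * u r (s * t) = u r s * u (r * s) t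

/-- A cocycle morphism `(φ, u) : (A, α, 𝔲) → (B, β, 𝔳)` between twisted actions on unital
C*-algebras: a *-homomorphism together with a norm-continuous map `u : G → U(B)` satisfying
the equivariance condition and the cocycle identity. -/
structure CocycleMorphism {G A B : Type*} [Group G] [TopologicalSpace G]
    [CStarAlgebra A] [CStarAlgebra B]
    (Sa : TwistedAction G A) (Sb : TwistedAction G B) where
  φ : A →⋆ₙₐ[ℂ] B
  u : G → B
  u_mem : ∀ g, u g ∈ unitary B
  u_cont : Continuous u
  equivariance : ∀ (g : G) (a : A), u g * Sb.α g (φ a) * star (u g) = φ (Sa.α g a)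
  cocycle : ∀ g h : G,
    plusMap φ (Sa.u g h) = u g * Sb.α g (u h) * Sb.u g h * star (u (g * h))

/-- `(ψ, v) ⪅ᵤ (φ, u)` : the pair `(ψ, v)` is approximately unitarily dominated by `(φ, u)`,
i.e. for every `ε > 0`, finite `F ⊆ A` and compact `K ⊆ G` there is a unitary `w ∈ U(B)` with
`‖ψ(a) - w φ(a) w*‖ ≤ ε` on `F` and `‖v_g - w u_g β_g(w)*‖ ≤ ε` on `K`. -/
def ApproxUDom {G A B : Type*} [Group G] [TopologicalSpace G]
    [CStarAlgebra A] [CStarAlgebra B] (Sb : TwistedAction G B)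
    (ψ : A → B) (v : G → B) (φ : A → B) (u : G → B) : Prop :=
  ∀ ε > (0 : ℝ), ∀ F : Finset A, ∀ K : Set G, IsCompact K →
    ∃ w ∈ unitary B,
      (∀ a ∈ F, ‖ψ a - w * φ a * star w‖ ≤ ε) ∧
      (∀ g ∈ K, ‖v g - w * u g * star (Sb.α g w)‖ ≤ ε)

/-- `(φ, u) ≈ₐᵤ (ψ, v)` : asymptotic unitary equivalence of pairs, witnessed by a
norm-continuous path of unitaries `w : [0,∞) → U(B)` with
`lim_t ‖ψ(a) - w_t φ(a) w_t*‖ = 0` and `lim_t max_{g ∈ K} ‖v_g - w_t u_g β_g(w_t)*‖ = 0`. -/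
def AsympUEquiv {G A B : Type*} [Group G] [TopologicalSpace G]
    [CStarAlgebra A] [CStarAlgebra B] (Sb : TwistedAction G B)
    (φ : A → B) (u : G → B) (ψ : A → B) (v : G → B) : Prop :=
  ∃ w : ℝ → B, Continuous w ∧ (∀ t, w t ∈ unitary B) ∧
    (∀ a : A,
      Filter.Tendsto (fun t => ‖ψ a - w t * φ a * star (w t)‖) Filter.atTop (nhds 0)) ∧
    (∀ K : Set G, IsCompact K → ∀ ε > (0 : ℝ), ∀ᶠ t in Filter.atTop,
      ∀ g ∈ K, ‖v g - w t * u g * star (Sb.α g (w t))‖ ≤ ε)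

end


open scoped CStarAlgebra

section Helpers
variable {A B C : Type*} [CStarAlgebra A] [CStarAlgebra B] [CStarAlgebra C]

lemma plusMap_mul (φ : A →⋆ₙₐ[ℂ] B) (x y : A) :
    plusMap φ (x * y) = plusMap φ x * plusMap φ y := by
  have h1 : φ x * φ 1 = φ x := by rw [← map_mul, mul_one]
  have h2 : φ 1 * φ y = φ y := by rw [← map_mul, one_mul]
  have h3 : φ 1 * φ 1 = φ 1 := by rw [← map_mul, one_mul]
  simp only [plusMap, map_mul, sub_mul, mul_sub, add_mul, mul_add, one_mul, mul_one, h1, h2, h3]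
  abel

lemma plusMap_star (φ : A →⋆ₙₐ[ℂ] B) (x : A) :
    plusMap φ (star x) = star (plusMap φ x) := by
  have h : star (φ 1) = φ 1 := by rw [← map_star, star_one]
  simp only [plusMap, map_star, star_sub, star_add, star_one, h]

lemma plusMap_one (φ : A →⋆ₙₐ[ℂ] B) : plusMap φ 1 = 1 := by simp [plusMap]

lemma plusMap_mul_map (φ : A →⋆ₙₐ[ℂ] B) (x y : A) :
    plusMap φ x * φ y = φ (x * y) := by
  have h2 : φ 1 * φ y = φ y := by rw [← map_mul, one_mul]
  simp only [plusMap, sub_mul, add_mul, one_mul, h2, map_mul]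
  abel

lemma map_mul_plusMap (φ : A →⋆ₙₐ[ℂ] B) (x y : A) :
    φ x * plusMap φ y = φ (x * y) := by
  have h1 : φ x * φ 1 = φ x := by rw [← map_mul, mul_one]
  simp only [plusMap, mul_sub, mul_add, mul_one, h1, map_mul]
  abel

lemma plusMap_comp (ψ : B →⋆ₙₐ[ℂ] C) (φ : A →⋆ₙₐ[ℂ] B) (x : A) :
    plusMap (ψ.comp φ) x = plusMap ψ (plusMap φ x) := by
  simp only [plusMap, map_sub, map_add, NonUnitalStarAlgHom.comp_apply]
  abel

lemma plusMap_mem_unitary (φ : A →⋆ₙₐ[ℂ] B) {w : A} (hw : w ∈ unitary A) :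
    plusMap φ w ∈ unitary B := by
  rw [Unitary.mem_iff] at hw ⊢
  constructor
  · rw [← plusMap_star, ← plusMap_mul, hw.1, plusMap_one]
  · rw [← plusMap_star, ← plusMap_mul, hw.2, plusMap_one]

lemma plusMap_continuous (φ : A →⋆ₙₐ[ℂ] B) : Continuous (plusMap φ) := by
  unfold plusMap
  exact ((map_continuous φ).add continuous_const).sub continuous_const

end Helpers

/-- Equivariance of `plusMap`: `u_g · γ_g(φ⁺(x)) · u_g* = φ⁺(β_g(x))`. -/
lemma pm_equivariance {G B C : Type*} [Group G] [TopologicalSpace G]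
    [CStarAlgebra B] [CStarAlgebra C]
    {Sb : TwistedAction G B} {Sc : TwistedAction G C}
    (Q : CocycleMorphism Sb Sc) (g : G) (x : B) :
    Q.u g * Sc.α g (plusMap Q.φ x) * star (Q.u g) = plusMap Q.φ (Sb.α g x) := by
  have h1 := Q.equivariance g x
  have h0 := Q.equivariance g 1
  have hu : Q.u g * star (Q.u g) = 1 := (Unitary.mem_iff.mp (Q.u_mem g)).2
  simp only [map_one] at h0
  simp only [plusMap, map_sub, map_add, map_one, mul_sub, sub_mul, mul_add, add_mul,
    mul_one, one_mul]
  rw [h1, h0, hu]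

/-- The composition `(ψ∘φ, g ↦ ψ⁺(u_g)·v_g)` of two cocycle morphisms between
twisted actions on unital C*-algebras is again a cocycle morphism, and this composition is
associative (for a fourth twisted action and a third cocycle morphism). -/
theorem cocycleMorphism_comp_and_assoc
    {G A B C D : Type*} [Group G] [TopologicalSpace G] [IsTopologicalGroup G]
    [LocallyCompactSpace G] [SecondCountableTopology G] [T2Space G]
    [CStarAlgebra A] [CStarAlgebra B] [CStarAlgebra C] [CStarAlgebra D]
    (Sα : TwistedAction G A) (Sβ : TwistedAction G B) (Sγ : TwistedAction G C)
    (Sδ : TwistedAction G D)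
    (P : CocycleMorphism Sα Sβ) (Q : CocycleMorphism Sβ Sγ) (R : CocycleMorphism Sγ Sδ) :
    (∃ QP : CocycleMorphism Sα Sγ,
        QP.φ = Q.φ.comp P.φ ∧ ∀ g : G, QP.u g = plusMap Q.φ (P.u g) * Q.u g)
    ∧ R.φ.comp (Q.φ.comp P.φ) = (R.φ.comp Q.φ).comp P.φ
    ∧ (∀ g : G,
        plusMap R.φ (plusMap Q.φ (P.u g) * Q.u g) * R.u g
          = plusMap (R.φ.comp Q.φ) (P.u g) * (plusMap R.φ (Q.u g) * R.u g)) := by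
  refine ⟨⟨{ φ := Q.φ.comp P.φ
             u := fun g => plusMap Q.φ (P.u g) * Q.u g
             u_mem := fun g => mul_mem (plusMap_mem_unitary Q.φ (P.u_mem g)) (Q.u_mem g)
             u_cont := ((plusMap_continuous Q.φ).comp P.u_cont).mul Q.u_cont
             equivariance := ?_
             cocycle := ?_ }, rfl, fun g => rfl⟩, ?_, ?_⟩
  · intro g a
    have hQ := Q.equivariance g (P.φ a)
    have hP := P.equivariance g a
    show (plusMap Q.φ (P.u g) * Q.u g) * Sγ.α g (Q.φ.comp P.φ a)
        * star (plusMap Q.φ (P.u g) * Q.u g) = Q.φ.comp P.φ (Sα.α g a)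
    calc (plusMap Q.φ (P.u g) * Q.u g) * Sγ.α g (Q.φ.comp P.φ a)
        * star (plusMap Q.φ (P.u g) * Q.u g)
        = plusMap Q.φ (P.u g) * (Q.u g * Sγ.α g (Q.φ (P.φ a)) * star (Q.u g))
            * star (plusMap Q.φ (P.u g)) := by
          simp only [NonUnitalStarAlgHom.comp_apply, star_mul, mul_assoc]
      _ = plusMap Q.φ (P.u g) * Q.φ (Sβ.α g (P.φ a)) * star (plusMap Q.φ (P.u g)) := by
          rw [hQ]
      _ = Q.φ (P.u g * Sβ.α g (P.φ a) * star (P.u g)) := by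
          rw [plusMap_mul_map, ← plusMap_star, map_mul_plusMap]
      _ = Q.φ.comp P.φ (Sα.α g a) := by rw [hP]; rfl
  · intro g h
    have hs : star (Q.u g) * Q.u g = 1 := (Unitary.mem_iff.mp (Q.u_mem g)).1
    have hcancel : ∀ x : C, star (Q.u g) * (Q.u g * x) = x := fun x => by
      rw [← mul_assoc, hs, one_mul]
    show plusMap (Q.φ.comp P.φ) (Sα.u g h)
        = (plusMap Q.φ (P.u g) * Q.u g) * Sγ.α g (plusMap Q.φ (P.u h) * Q.u h)
            * Sγ.u g h * star (plusMap Q.φ (P.u (g * h)) * Q.u (g * h))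
    rw [plusMap_comp, P.cocycle g h, plusMap_mul, plusMap_mul, plusMap_mul, plusMap_star,
      Q.cocycle g h, ← pm_equivariance Q g (P.u h)]
    simp only [map_mul, star_mul, mul_assoc, hcancel]
  · rfl
  · intro g
    rw [plusMap_mul, plusMap_comp, mul_assoc]
end

section
/- Let G be a second-countable locally compact Hausdorff group and let (α,𝔲): G ↷ A and (β,𝔳): G ↷ B be gently twisted actions on C*-algebras. Let Λ be a directed set and let (φ^λ,u^λ)_{λ∈Λ} be a net of proper cocycle morphisms (A,α,𝔲) → (B,β,𝔳) such that for every a ∈ A the net (φ^λ(a))_λ is Cauchy in norm, and for every compact set K ⊆ G the net of restrictions (u^λ|_K)_λ is uniformly Cauchy in norm. Then there exists a proper cocycle morphism (φ,u): (A,α,𝔲) → (B,β,𝔳) such that ‖φ^λ(a) − φ(a)‖ → 0 for every a ∈ A and sup_{g∈K} ‖u^λ_g − u_g‖ → 0 for every compact set K ⊆ G; that is, the set of proper cocycle morphisms is complete in its natural uniform topology. -/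
/-!
Common definitions: gently twisted actions of a locally compact group on a (not necessarily
unital) C*-algebra, proper cocycle morphisms between them, and the relevant equivalence
relations.  `Unitization ℂ A` plays the role of the minimal unitization `A†`, and
`Unitization.starMap` is the canonical unital extension `φ†`.
-/

noncomputable section

/-- The canonical unital extension `φ†` of a *-homomorphism to the minimal unitizations. -/
abbrev NonUnitalStarAlgHom.dag {A B : Type*} [NonUnitalCStarAlgebra A] [NonUnitalCStarAlgebra B]
    (φ : A →⋆ₙₐ[ℂ] B) : Unitization ℂ A →⋆ₐ[ℂ] Unitization ℂ B := Unitization.starMap φ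

/-- The canonical unital extension `α†` of a *-automorphism to the minimal unitization. -/
abbrev StarAlgEquiv.dag {A : Type*} [NonUnitalCStarAlgebra A] (e : A ≃⋆ₐ[ℂ] A) :
    Unitization ℂ A →⋆ₐ[ℂ] Unitization ℂ A := Unitization.starMap (e : A →⋆ₙₐ[ℂ] A)

/-- Membership in `U(1+A)`: a unitary of the minimal unitization `A†` whose scalar part is `1`,
i.e. which differs from `1` by an element of `A`. -/
def IsU1 {A : Type*} [NonUnitalCStarAlgebra A] (u : Unitization ℂ A) : Prop :=
  u ∈ unitary (Unitization ℂ A) ∧ u.fst = 1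

/-- A gently twisted action `(α, 𝔲) : G ↷ A` of a topological group on a C*-algebra:
a point-norm continuous map `α : G → Aut(A)` together with a norm-continuous 2-cocycle
`𝔲 : G × G → U(1+A)` satisfying the twisted action identities. -/
structure GentlyTwistedAction (G A : Type*) [Group G] [TopologicalSpace G]
    [NonUnitalCStarAlgebra A] where
  α : G → (A ≃⋆ₐ[ℂ] A)
  α_cont : ∀ a : A, Continuous fun g => α g a
  u : G → G → Unitization ℂ A
  u_mem : ∀ s t, IsU1 (u s t)
  u_cont : Continuous fun p : G × G => u p.1 p.2
  α_one : ∀ a : A, α 1 a = a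
  α_mul : ∀ s t : G, ∀ a : A,
    ((α s (α t a) : A) : Unitization ℂ A)
      = u s t * ((α (s * t) a : A) : Unitization ℂ A) * star (u s t)
  u_one_left : ∀ s, u 1 s = 1
  u_one_right : ∀ s, u s 1 = 1
  u_cocycle : ∀ r s t : G, (α r).dag (u s t) * u r (s * t) = u r s * u (r * s) t

/-- A proper cocycle morphism `(φ, u) : (A, α, 𝔲) → (B, β, 𝔳)` between gently twisted actions:
a *-homomorphism `φ : A → B` together with a norm-continuous map `u : G → U(1+B)` satisfying
the equivariance condition and the cocycle identity. -/
structure ProperCocycleMorphism {G A B : Type*} [Group G] [TopologicalSpace G]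
    [NonUnitalCStarAlgebra A] [NonUnitalCStarAlgebra B]
    (Sa : GentlyTwistedAction G A) (Sb : GentlyTwistedAction G B) where
  φ : A →⋆ₙₐ[ℂ] B
  u : G → Unitization ℂ B
  u_mem : ∀ g, IsU1 (u g)
  u_cont : Continuous u
  equivariance : ∀ (g : G) (a : A),
    u g * ((Sb.α g (φ a) : B) : Unitization ℂ B) * star (u g)
      = ((φ (Sa.α g a) : B) : Unitization ℂ B)
  cocycle : ∀ g h : G,
    φ.dag (Sa.u g h) = u g * (Sb.α g).dag (u h) * Sb.u g h * star (u (g * h))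

/-- Proper approximate unitary equivalence `(φ,u) ≈_pu (ψ,v)` of pairs, relative to the target
gently twisted action: for every `ε > 0`, finite `F ⊆ A` and compact `K ⊆ G` there is a
unitary `w ∈ U(1+B)` with `‖ψ(a) - w φ(a) w*‖ ≤ ε` on `F` and `‖v_g - w u_g β†_g(w)*‖ ≤ ε`
on `K`. -/
def ProperApproxUEquiv {G A B : Type*} [Group G] [TopologicalSpace G]
    [NonUnitalCStarAlgebra A] [NonUnitalCStarAlgebra B]
    (Sb : GentlyTwistedAction G B)
    (φ : A → B) (u : G → Unitization ℂ B) (ψ : A → B) (v : G → Unitization ℂ B) : Prop :=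
  ∀ ε > (0 : ℝ), ∀ F : Finset A, ∀ K : Set G, IsCompact K →
    ∃ w : Unitization ℂ B, IsU1 w ∧
      (∀ a ∈ F,
        ‖((ψ a : B) : Unitization ℂ B) - w * ((φ a : B) : Unitization ℂ B) * star w‖ ≤ ε) ∧
      (∀ g ∈ K, ‖v g - w * u g * star ((Sb.α g).dag w)‖ ≤ ε)

/-- Proper asymptotic unitary equivalence of pairs, witnessed by a norm-continuous path of
unitaries `w : [0,∞) → U(1+B)`. -/
def ProperAsympUEquiv {G A B : Type*} [Group G] [TopologicalSpace G]
    [NonUnitalCStarAlgebra A] [NonUnitalCStarAlgebra B]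
    (Sb : GentlyTwistedAction G B)
    (φ : A → B) (u : G → Unitization ℂ B) (ψ : A → B) (v : G → Unitization ℂ B) : Prop :=
  ∃ w : ℝ → Unitization ℂ B, Continuous w ∧ (∀ t, IsU1 (w t)) ∧
    (∀ a : A, Filter.Tendsto
      (fun t => ‖((ψ a : B) : Unitization ℂ B) - w t * ((φ a : B) : Unitization ℂ B)
          * star (w t)‖)
      Filter.atTop (nhds 0)) ∧
    (∀ K : Set G, IsCompact K → ∀ ε > (0 : ℝ), ∀ᶠ t in Filter.atTop,
      ∀ g ∈ K, ‖v g - w t * u g * star ((Sb.α g).dag (w t))‖ ≤ ε)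

end


section AuxComplete

open Filter Topology Unitization

variable {Λ : Type*} [Preorder Λ] [IsDirected Λ (· ≤ ·)] [Nonempty Λ]

/-- A Cauchy net in a complete normed space converges. -/
lemma net_tendsto_of_cauchy {X : Type*} [NormedAddCommGroup X] [CompleteSpace X]
    (f : Λ → X)
    (h : ∀ ε > (0 : ℝ), ∃ l₀, ∀ l₁, l₀ ≤ l₁ → ∀ l₂, l₀ ≤ l₂ → ‖f l₁ - f l₂‖ ≤ ε) :
    ∃ x, Tendsto f atTop (nhds x) := by
  have hc : Cauchy (Filter.map f atTop) := by
    rw [Metric.cauchy_iff]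
    refine ⟨Filter.map_neBot, fun ε hε => ?_⟩
    obtain ⟨l₀, hl₀⟩ := h (ε / 2) (half_pos hε)
    refine ⟨f '' {l | l₀ ≤ l}, Filter.image_mem_map (Filter.mem_atTop l₀), ?_⟩
    rintro x ⟨l₁, h₁, rfl⟩ y ⟨l₂, h₂, rfl⟩
    rw [dist_eq_norm]
    exact lt_of_le_of_lt (hl₀ l₁ h₁ l₂ h₂) (half_lt_self hε)
  exact CompleteSpace.complete hc

lemma unitization_continuous_fst {B : Type*} [NonUnitalCStarAlgebra B] :
    Continuous (fun x => x.fst : Unitization ℂ B → ℂ) :=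
  continuous_fst.comp Unitization.uniformEquivProd.continuous

lemma unitization_continuous_snd {B : Type*} [NonUnitalCStarAlgebra B] :
    Continuous (fun x => x.snd : Unitization ℂ B → B) :=
  continuous_snd.comp Unitization.uniformEquivProd.continuous

lemma starMap_eq_aux {B C : Type*} [NonUnitalCStarAlgebra B] [NonUnitalCStarAlgebra C]
    (ψ : B →⋆ₙₐ[ℂ] C) (x : Unitization ℂ B) :
    Unitization.starMap ψ x = Unitization.inl x.fst + Unitization.inr (ψ x.snd) := by
  conv_lhs => rw [← Unitization.inl_fst_add_inr_snd_eq x]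
  rw [map_add, Unitization.starMap_inr, Unitization.starMap_inl,
    Unitization.algebraMap_eq_inl]

lemma continuous_starMap_aux {B C : Type*} [NonUnitalCStarAlgebra B] [NonUnitalCStarAlgebra C]
    (ψ : B →⋆ₙₐ[ℂ] C) (hψ : Continuous ψ) :
    Continuous (Unitization.starMap ψ) := by
  have : (Unitization.starMap ψ : Unitization ℂ B → Unitization ℂ C)
      = fun x => Unitization.inl x.fst + Unitization.inr (ψ x.snd) :=
    funext (starMap_eq_aux ψ)
  rw [this]
  have hinl : Continuous (Unitization.inl : ℂ → Unitization ℂ C) := by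
    rw [← Unitization.algebraMap_eq_inl]
    exact continuous_algebraMap ℂ (Unitization ℂ C)
  exact (hinl.comp unitization_continuous_fst).add
    (Unitization.continuous_inr.comp (hψ.comp unitization_continuous_snd))

end AuxComplete

set_option maxHeartbeats 1000000 in
set_option synthInstance.maxHeartbeats 800000 in
/-- The set of proper cocycle morphisms between two gently twisted actions is
complete in its natural uniform topology: every net `(φ^λ, u^λ)` of proper cocycle morphisms
which is Cauchy (pointwise in norm for the *-homomorphisms, uniformly in norm over compact
subsets of `G` for the unitary parts) converges to a proper cocycle morphism `(φ, u)`. -/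
theorem properCocycleMorphism_complete
    {G A B : Type*} [Group G] [TopologicalSpace G] [IsTopologicalGroup G]
    [LocallyCompactSpace G] [SecondCountableTopology G] [T2Space G]
    [NonUnitalCStarAlgebra A] [NonUnitalCStarAlgebra B]
    (Sα : GentlyTwistedAction G A) (Sβ : GentlyTwistedAction G B)
    {Λ : Type*} [Preorder Λ] [IsDirected Λ (· ≤ ·)] [Nonempty Λ]
    (P : Λ → ProperCocycleMorphism Sα Sβ)
    (hφ : ∀ a : A, ∀ ε > (0 : ℝ), ∃ l₀ : Λ, ∀ l₁, l₀ ≤ l₁ → ∀ l₂, l₀ ≤ l₂ →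
      ‖(P l₁).φ a - (P l₂).φ a‖ ≤ ε)
    (hu : ∀ K : Set G, IsCompact K → ∀ ε > (0 : ℝ), ∃ l₀ : Λ, ∀ l₁, l₀ ≤ l₁ → ∀ l₂, l₀ ≤ l₂ →
      ∀ g ∈ K, ‖(P l₁).u g - (P l₂).u g‖ ≤ ε) :
    ∃ Q : ProperCocycleMorphism Sα Sβ,
      (∀ a : A,
        Filter.Tendsto (fun l => ‖(P l).φ a - Q.φ a‖) Filter.atTop (nhds 0)) ∧
      (∀ K : Set G, IsCompact K → ∀ ε > (0 : ℝ),
        ∀ᶠ l in Filter.atTop, ∀ g ∈ K, ‖(P l).u g - Q.u g‖ ≤ ε) := by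
  classical
  have hβc : ∀ g : G, Continuous (Sβ.α g) := fun g =>
    (NonUnitalStarAlgHom.isometry (Sβ.α g) (Sβ.α g).injective).continuous
  -- limits of the *-homomorphism parts
  have hφlim : ∀ a : A, ∃ b : B,
      Filter.Tendsto (fun l => (P l).φ a) Filter.atTop (nhds b) :=
    fun a => net_tendsto_of_cauchy _ (hφ a)
  choose F hF using hφlim
  -- limits of the unitary parts
  have hulim : ∀ g : G, ∃ v : Unitization ℂ B,
      Filter.Tendsto (fun l => (P l).u g) Filter.atTop (nhds v) := by
    intro g
    apply net_tendsto_of_cauchy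
    intro ε hε
    obtain ⟨l₀, h⟩ := hu {g} isCompact_singleton ε hε
    exact ⟨l₀, fun l₁ h₁ l₂ h₂ => h l₁ h₁ l₂ h₂ g rfl⟩
  choose U hU using hulim
  -- eventual uniform estimate on compacts
  have hUunif : ∀ K : Set G, IsCompact K → ∀ ε > (0 : ℝ),
      ∀ᶠ l in Filter.atTop, ∀ g ∈ K, ‖(P l).u g - U g‖ ≤ ε := by
    intro K hK ε hε
    obtain ⟨l₀, hl₀⟩ := hu K hK (ε / 2) (half_pos hε)
    filter_upwards [Filter.mem_atTop l₀] with l₁ h₁ g hg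
    have ht : Filter.Tendsto (fun l₂ => ‖(P l₁).u g - (P l₂).u g‖) Filter.atTop
        (nhds ‖(P l₁).u g - U g‖) := (tendsto_const_nhds.sub (hU g)).norm
    have hev : ∀ᶠ l₂ in Filter.atTop, ‖(P l₁).u g - (P l₂).u g‖ ≤ ε / 2 := by
      filter_upwards [Filter.mem_atTop l₀] with l₂ h₂
      exact hl₀ l₁ h₁ l₂ h₂ g hg
    exact (le_of_tendsto ht hev).trans (by linarith)
  -- the limit *-homomorphism
  let φ : A →⋆ₙₐ[ℂ] B :=
    { toFun := F
      map_add' := fun a b => tendsto_nhds_unique (hF (a + b))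
        (by simpa only [map_add] using (hF a).add (hF b))
      map_smul' := fun c a => tendsto_nhds_unique (hF (c • a))
        (by simpa only [map_smul, MonoidHom.id_apply] using (hF a).const_smul c)
      map_zero' := tendsto_nhds_unique (hF 0)
        (by simpa only [map_zero] using
          (tendsto_const_nhds : Filter.Tendsto (fun _ : Λ => (0 : B)) Filter.atTop (nhds 0)))
      map_mul' := fun a b => tendsto_nhds_unique (hF (a * b))
        (by simpa only [map_mul] using (hF a).mul (hF b))
      map_star' := fun a => tendsto_nhds_unique (hF (star a))
        (by simpa only [map_star] using (hF a).star) }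
  -- membership of the limit unitaries
  have hUmem : ∀ g : G, IsU1 (U g) := by
    intro g
    refine ⟨Unitary.mem_iff.mpr ⟨?_, ?_⟩, ?_⟩
    · exact tendsto_nhds_unique ((hU g).star.mul (hU g))
        (tendsto_const_nhds.congr fun l =>
          (Unitary.star_mul_self_of_mem ((P l).u_mem g).1).symm)
    · exact tendsto_nhds_unique ((hU g).mul (hU g).star)
        (tendsto_const_nhds.congr fun l =>
          (Unitary.mul_star_self_of_mem ((P l).u_mem g).1).symm)
    · exact tendsto_nhds_unique ((unitization_continuous_fst.tendsto _).comp (hU g))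
        (tendsto_const_nhds.congr fun l => (((P l).u_mem g).2).symm)
  -- continuity of the limit unitary map
  have hUcont : Continuous U := by
    rw [continuous_iff_continuousAt]
    intro g
    obtain ⟨K, hKc, hKn⟩ := exists_compact_mem_nhds g
    have htu : TendstoUniformlyOn (fun l g => (P l).u g) U Filter.atTop K := by
      rw [Metric.tendstoUniformlyOn_iff]
      intro ε hε
      filter_upwards [hUunif K hKc (ε / 2) (half_pos hε)] with l hl g' hg'
      rw [dist_eq_norm, norm_sub_rev]
      exact lt_of_le_of_lt (hl g' hg') (half_lt_self hε)
    exact (htu.continuousOn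
      (Filter.Eventually.of_forall fun l => ((P l).u_cont).continuousOn).frequently).continuousAt hKn
  haveI hT2 : T2Space (Unitization ℂ B) := inferInstance
  have heq : ∀ (g : G) (a : A),
      U g * ((Sβ.α g (φ a) : B) : Unitization ℂ B) * star (U g)
        = ((φ (Sα.α g a) : B) : Unitization ℂ B) := by
    intro g a
    have h1 : Filter.Tendsto
        (fun l => (P l).u g * ((Sβ.α g ((P l).φ a) : B) : Unitization ℂ B)
          * star ((P l).u g)) Filter.atTop
        (nhds (U g * ((Sβ.α g (φ a) : B) : Unitization ℂ B) * star (U g))) :=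
      ((hU g).mul ((Unitization.continuous_inr.tendsto _).comp
        (((hβc g).tendsto _).comp (hF a)))).mul (hU g).star
    have h2 : Filter.Tendsto
        (fun l => (((P l).φ (Sα.α g a) : B) : Unitization ℂ B)) Filter.atTop
        (nhds (((φ (Sα.α g a) : B) : Unitization ℂ B))) :=
      (Unitization.continuous_inr.tendsto _).comp (hF (Sα.α g a))
    exact tendsto_nhds_unique (h1.congr fun l => (P l).equivariance g a) h2
  have hco : ∀ g h : G,
      φ.dag (Sα.u g h) = U g * (Sβ.α g).dag (U h) * Sβ.u g h * star (U (g * h)) := by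
    intro g h
    have h1 : Filter.Tendsto
        (fun l => (P l).φ.dag (Sα.u g h)) Filter.atTop (nhds (φ.dag (Sα.u g h))) := by
      simp only [NonUnitalStarAlgHom.dag, starMap_eq_aux]
      exact tendsto_const_nhds.add
        ((Unitization.continuous_inr.tendsto _).comp (hF (Sα.u g h).snd))
    have h2 : Filter.Tendsto
        (fun l => (P l).u g * (Sβ.α g).dag ((P l).u h) * Sβ.u g h * star ((P l).u (g * h)))
        Filter.atTop
        (nhds (U g * (Sβ.α g).dag (U h) * Sβ.u g h * star (U (g * h)))) := by
      have hdag : Continuous ((Sβ.α g).dag : Unitization ℂ B → Unitization ℂ B) :=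
        continuous_starMap_aux _ (hβc g)
      exact (((hU g).mul ((hdag.tendsto _).comp (hU h))).mul tendsto_const_nhds).mul
        (hU (g * h)).star
    exact tendsto_nhds_unique (h1.congr fun l => (P l).cocycle g h) h2
  refine ⟨⟨φ, U, hUmem, hUcont, heq, hco⟩, fun a => ?_, hUunif⟩
  have := ((hF a).sub (tendsto_const_nhds (x := F a))).norm
  simp at this
  exact this
end

section
/- Let G be a second-countable locally compact Hausdorff group, let (φ_n,u⁽ⁿ⁾): (A_n,α⁽ⁿ⁾,𝔲⁽ⁿ⁾) → (A_{n+1},α⁽ⁿ⁺¹⁾,𝔲⁽ⁿ⁺¹⁾) be an inductive system of proper cocycle morphisms between gently twisted G-C*-algebras, and let (A, (φ_{n,∞})_{n≥1}) be a realization of the C*-inductive limit of the underlying system. Then: (1) there exists a unique gently twisted action (α,𝔲): G ↷ A such that α_g ∘ φ_{n,∞} = φ_{n,∞} ∘ Ad(𝕌⁽ⁿ⁻¹⁾_g) ∘ α⁽ⁿ⁾_g for all n ≥ 1 and g ∈ G, and 𝔲_{g,h} = φ_{1,∞}†(𝔲⁽¹⁾_{g,h}) for all g,h ∈ G; (2)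 for each n the pair (φ,u)_{n,∞} := (φ_{n,∞}, g ↦ φ_{n,∞}†(𝕌⁽ⁿ⁻¹⁾_g)*) is a proper cocycle morphism (A_n,α⁽ⁿ⁾,𝔲⁽ⁿ⁾) → (A,α,𝔲) satisfying (φ,u)_{n,∞} = (φ,u)_{n+1,∞} ∘ (φ_n,u⁽ⁿ⁾); and (3) (A,α,𝔲) with these morphisms has the universal property: for every gently twisted G-C*-algebra (B,β,𝔳) and every family of proper cocycle morphisms (θ_n,v⁽ⁿ⁾): (A_n,α⁽ⁿ⁾,𝔲⁽ⁿ⁾) → (B,β,𝔳) with (θ_n,v⁽ⁿ⁾) = (θ_{n+1},v⁽ⁿ⁺¹⁾) ∘ (φ_n,u⁽ⁿ⁾) for all n, there is a unique proper cocycle morphism (Θ,V): (A,α,𝔲) → (B,β,𝔳) with (Θ,V) ∘ (φ,u)_{n,∞} = (θ_n,v⁽ⁿ⁾) for all n. -/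
/-! ### Auxiliary machinery -/

noncomputable section GTAux
open Unitization

variable {A B : Type*} [NonUnitalCStarAlgebra A] [NonUnitalCStarAlgebra B]

lemma GT.starHomCont {F : Type*} [FunLike F A B] [NonUnitalAlgHomClass F ℂ A B]
    [StarHomClass F A B] (φ : F) : Continuous φ :=
  AddMonoidHomClass.continuous_of_bound φ 1
    (fun x => by simpa using NonUnitalStarAlgHom.norm_apply_le φ x)

lemma GT.fst_starMap (φ : A →⋆ₙₐ[ℂ] B) (x : Unitization ℂ A) :
    (starMap φ x).fst = x.fst := by
  induction x using Unitization.ind with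
  | inl_add_inr r a => simp [starMap_inr, Unitization.algebraMap_eq_inl]

lemma GT.continuous_usnd : Continuous (fun x : Unitization ℂ A => x.snd) :=
  continuous_snd.comp (Unitization.uniformEquivProd (𝕜 := ℂ) (A := A)).continuous

lemma GT.cancel_left {M : Type*} [Monoid M] [StarMul M] {u : M} (h : u ∈ unitary M)
    (x : M) : star u * (u * x) = x := by
  rw [← mul_assoc, Unitary.star_mul_self_of_mem h, one_mul]

lemma GT.cancel_left' {M : Type*} [Monoid M] [StarMul M] {u : M} (h : u ∈ unitary M)
    (x : M) : u * (star u * x) = x := by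
  rw [← mul_assoc, Unitary.mul_star_self_of_mem h, one_mul]

lemma GT.map_unitary {R S F : Type*} [Monoid R] [StarMul R] [Monoid S] [StarMul S]
    [FunLike F R S] [MonoidHomClass F R S] [StarHomClass F R S] (φ : F) {u : R}
    (hu : u ∈ unitary R) : φ u ∈ unitary S := by
  rw [Unitary.mem_iff] at hu ⊢
  refine ⟨?_, ?_⟩
  · rw [← map_star, ← map_mul, hu.1, map_one]
  · rw [← map_star, ← map_mul, hu.2, map_one]

lemma IsU1.one : IsU1 (1 : Unitization ℂ A) := ⟨one_mem _, rfl⟩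

lemma IsU1.mul {u v : Unitization ℂ A} (hu : IsU1 u) (hv : IsU1 v) : IsU1 (u * v) :=
  ⟨mul_mem hu.1 hv.1, by rw [Unitization.fst_mul, hu.2, hv.2, one_mul]⟩

lemma IsU1.star' {u : Unitization ℂ A} (hu : IsU1 u) : IsU1 (star u) :=
  ⟨Unitary.star_mem hu.1, by rw [Unitization.fst_star, hu.2, star_one]⟩

lemma IsU1.starMap (φ : A →⋆ₙₐ[ℂ] B) {u : Unitization ℂ A} (hu : IsU1 u) :
    IsU1 (Unitization.starMap φ u) :=
  ⟨GT.map_unitary _ hu.1, by rw [GT.fst_starMap, hu.2]⟩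

/-- If the scalar part of `u * ↑a * star u` vanishes, it comes from `A`. -/
lemma GT.inr_conj (u : Unitization ℂ A) (a : A) :
    (((u * ↑a * star u).snd : A) : Unitization ℂ A) = u * ↑a * star u :=
  Unitization.ext (by simp [Unitization.fst_mul]) (by simp)

lemma GT.inr_conj' (u : Unitization ℂ A) (a : A) :
    (((star u * ↑a * u).snd : A) : Unitization ℂ A) = star u * ↑a * u := by
  have := GT.inr_conj (star u) a
  rwa [star_star] at this

/-- Conjugation by a unitary of the unitization, as a ⋆-automorphism of `A`. -/
def GT.cAd {u : Unitization ℂ A} (hu : u ∈ unitary (Unitization ℂ A)) : A ≃⋆ₐ[ℂ] A where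
  toFun a := (u * ↑a * star u).snd
  invFun a := (star u * ↑a * u).snd
  left_inv a := by
    apply Unitization.inr_injective (R := ℂ)
    rw [GT.inr_conj' u, GT.inr_conj u]
    simp only [mul_assoc, GT.cancel_left hu, Unitary.star_mul_self_of_mem hu, mul_one]
  right_inv a := by
    apply Unitization.inr_injective (R := ℂ)
    rw [GT.inr_conj u, GT.inr_conj' u]
    simp only [mul_assoc, GT.cancel_left' hu, Unitary.mul_star_self_of_mem hu, mul_one]
  map_mul' a b := by
    apply Unitization.inr_injective (R := ℂ)
    rw [GT.inr_conj u (a * b), Unitization.inr_mul, Unitization.inr_mul, GT.inr_conj, GT.inr_conj]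
    simp only [mul_assoc, GT.cancel_left hu]
  map_add' a b := by
    apply Unitization.inr_injective (R := ℂ)
    rw [GT.inr_conj u (a + b), Unitization.inr_add, Unitization.inr_add, GT.inr_conj, GT.inr_conj]
    simp only [mul_add, add_mul]
  map_star' a := by
    apply Unitization.inr_injective (R := ℂ)
    rw [GT.inr_conj u (star a), Unitization.inr_star, Unitization.inr_star, GT.inr_conj]
    simp only [star_mul, star_star, Unitization.inr_star, mul_assoc]
  map_smul' c a := by
    apply Unitization.inr_injective (R := ℂ)
    rw [GT.inr_conj u (c • a), Unitization.inr_smul, Unitization.inr_smul, GT.inr_conj]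
    simp only [smul_mul_assoc, mul_smul_comm]

lemma GT.inr_cAd {u : Unitization ℂ A} (hu : u ∈ unitary (Unitization ℂ A)) (a : A) :
    ((GT.cAd hu a : A) : Unitization ℂ A) = u * ↑a * star u := GT.inr_conj u a

lemma GT.starMap_eq_self {e : A →⋆ₙₐ[ℂ] A} (h : ∀ a, e a = a) (x : Unitization ℂ A) :
    Unitization.starMap e x = x := by
  have he : e = NonUnitalStarAlgHom.id ℂ A := DFunLike.ext _ _ h
  rw [he, Unitization.starMap_id]
  rfl

lemma GT.equiv_hom_apply {e : A ≃⋆ₐ[ℂ] A} (a : A) : (e : A →⋆ₙₐ[ℂ] A) a = e a := rfl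

end GTAux
/-! ### Lifting compatible families of morphisms to the inductive limit -/

noncomputable section GTLift
open Unitization

variable {A : ℕ → Type v} [∀ n, NonUnitalCStarAlgebra (A n)]
  {Alim : Type w} [NonUnitalCStarAlgebra Alim] {B : Type*} [NonUnitalCStarAlgebra B]

lemma GT.chain_of_le (p : ∀ n, A n →⋆ₙₐ[ℂ] A (n + 1))
    (chain : ∀ n m : ℕ, A n →⋆ₙₐ[ℂ] A m)
    (hchain_refl : ∀ n, chain n n = NonUnitalStarAlgHom.id ℂ (A n))
    (hchain_succ : ∀ n m, n ≤ m → chain n (m + 1) = (p m).comp (chain n m))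
    (f : ∀ n, A n →⋆ₙₐ[ℂ] B) (hf : ∀ n, f n = (f (n + 1)).comp (p n)) :
    ∀ n m, n ≤ m → f n = (f m).comp (chain n m) := by
  intro n m hnm
  induction m, hnm using Nat.le_induction with
  | base => rw [hchain_refl]; ext a; rfl
  | succ m hm ih =>
    rw [hchain_succ n m hm, ih, hf m]
    ext a; rfl

lemma GT.unique_on (φlim : ∀ n, A n →⋆ₙₐ[ℂ] Alim)
    (hdense : Dense (⋃ n, Set.range (φlim n)))
    {Y : Type*} [TopologicalSpace Y] [T2Space Y] {F G : Alim → Y}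
    (hF : Continuous F) (hG : Continuous G)
    (h : ∀ n a, F (φlim n a) = G (φlim n a)) : F = G := by
  refine Continuous.ext_on hdense hF hG ?_
  rintro x hx
  obtain ⟨n, hn⟩ := Set.mem_iUnion.mp hx
  obtain ⟨a, rfl⟩ := hn
  exact h n a

lemma GT.lift (p : ∀ n, A n →⋆ₙₐ[ℂ] A (n + 1))
    (chain : ∀ n m : ℕ, A n →⋆ₙₐ[ℂ] A m)
    (hchain_refl : ∀ n, chain n n = NonUnitalStarAlgHom.id ℂ (A n))
    (hchain_succ : ∀ n m, n ≤ m → chain n (m + 1) = (p m).comp (chain n m))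
    (φlim : ∀ n, A n →⋆ₙₐ[ℂ] Alim)
    (hcompat : ∀ n, φlim n = (φlim (n + 1)).comp (p n))
    (hdense : Dense (⋃ n, Set.range (φlim n)))
    (hnorm : ∀ n (a : A n),
      Filter.Tendsto (fun m => ‖chain n m a‖) Filter.atTop (nhds ‖φlim n a‖))
    (f : ∀ n, A n →⋆ₙₐ[ℂ] B) (hf : ∀ n, f n = (f (n + 1)).comp (p n)) :
    ∃ F : Alim →⋆ₙₐ[ℂ] B, (∀ n a, F (φlim n a) = f n a) ∧ ∀ x, ‖F x‖ ≤ ‖x‖ := by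
  have hφ : ∀ n m, n ≤ m → φlim n = (φlim m).comp (chain n m) :=
    GT.chain_of_le p chain hchain_refl hchain_succ φlim hcompat
  have hfm : ∀ n m, n ≤ m → f n = (f m).comp (chain n m) :=
    GT.chain_of_le p chain hchain_refl hchain_succ f hf
  have hφ' : ∀ n m (h : n ≤ m) (a : A n), φlim n a = φlim m (chain n m a) := by
    intro n m h a; rw [hφ n m h]; rfl
  have hfm' : ∀ n m (h : n ≤ m) (a : A n), f n a = f m (chain n m a) := by
    intro n m h a; rw [hfm n m h]; rfl
  have hbound : ∀ n a, ‖f n a‖ ≤ ‖φlim n a‖ := by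
    intro n a
    refine ge_of_tendsto (hnorm n a) ?_
    refine Filter.eventually_atTop.mpr ⟨n, fun m hm => ?_⟩
    rw [hfm' n m hm a]
    exact NonUnitalStarAlgHom.norm_apply_le _ _
  have hwd : ∀ n m (a : A n) (b : A m), φlim n a = φlim m b → f n a = f m b := by
    intro n m a b hab
    have hkn : n ≤ max n m := le_max_left n m
    have hkm : m ≤ max n m := le_max_right n m
    have h1 : φlim (max n m) (chain n (max n m) a - chain m (max n m) b) = 0 := by
      rw [map_sub, ← hφ' n _ hkn a, ← hφ' m _ hkm b, hab, sub_self]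
    have h2 : f (max n m) (chain n (max n m) a - chain m (max n m) b) = 0 := by
      have hb := hbound (max n m) (chain n (max n m) a - chain m (max n m) b)
      rw [h1, norm_zero] at hb
      exact norm_le_zero_iff.mp hb
    rw [map_sub, sub_eq_zero] at h2
    rw [hfm' n _ hkn a, hfm' m _ hkm b, h2]
  -- the dense submodule
  set s : Set Alim := ⋃ n, Set.range (φlim n) with hs
  have hmem : ∀ n (a : A n), φlim n a ∈ s := fun n a =>
    Set.mem_iUnion.mpr ⟨n, Set.mem_range_self a⟩
  have hrep : ∀ x ∈ s, ∃ n, ∃ a : A n, φlim n a = x := by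
    intro x hx
    obtain ⟨n, hn⟩ := Set.mem_iUnion.mp hx
    obtain ⟨a, ha⟩ := hn
    exact ⟨n, a, ha⟩
  let D : Submodule ℂ Alim :=
    { carrier := s
      add_mem' := by
        rintro x y hx hy
        obtain ⟨n, a, rfl⟩ := hrep x hx
        obtain ⟨m, b, rfl⟩ := hrep y hy
        have : φlim n a + φlim m b
            = φlim (max n m) (chain n (max n m) a + chain m (max n m) b) := by
          rw [map_add, ← hφ' n _ (le_max_left n m) a, ← hφ' m _ (le_max_right n m) b]
        rw [this]; exact hmem _ _
      zero_mem' := by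
        have : (0 : Alim) = φlim 0 0 := by rw [map_zero]
        rw [this]; exact hmem _ _
      smul_mem' := by
        rintro c x hx
        obtain ⟨n, a, rfl⟩ := hrep x hx
        rw [← map_smul]; exact hmem _ _ }
  have hDs : (D : Set Alim) = s := rfl
  -- the function on `D`
  have hch : ∀ x : D, ∃ n, ∃ a : A n, φlim n a = (x : Alim) := fun x => hrep x x.2
  let idx : D → ℕ := fun x => (hch x).choose
  let elt : ∀ x : D, A (idx x) := fun x => (hch x).choose_spec.choose
  have helt : ∀ x : D, φlim (idx x) (elt x) = (x : Alim) := fun x =>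
    (hch x).choose_spec.choose_spec
  let f0 : D → B := fun x => f (idx x) (elt x)
  have hf0 : ∀ n (a : A n) (x : D), (x : Alim) = φlim n a → f0 x = f n a := by
    intro n a x hx
    exact hwd _ _ _ _ (by rw [helt x, hx])
  have hf0add : ∀ x y : D, f0 (x + y) = f0 x + f0 y := by
    intro x y
    obtain ⟨n, a, ha⟩ := hch x
    obtain ⟨m, b, hb⟩ := hch y
    have hxy : ((x + y : D) : Alim)
        = φlim (max n m) (chain n (max n m) a + chain m (max n m) b) := by
      rw [Submodule.coe_add, ← ha, ← hb, map_add,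
        ← hφ' n _ (le_max_left n m) a, ← hφ' m _ (le_max_right n m) b]
    rw [hf0 _ _ _ hxy, map_add, hf0 n a x ha.symm, hf0 m b y hb.symm,
      ← hfm' n _ (le_max_left n m) a, ← hfm' m _ (le_max_right n m) b]
  have hf0smul : ∀ (c : ℂ) (x : D), f0 (c • x) = c • f0 x := by
    intro c x
    obtain ⟨n, a, ha⟩ := hch x
    have hcx : ((c • x : D) : Alim) = φlim n (c • a) := by
      rw [Submodule.coe_smul, ← ha, map_smul]
    rw [hf0 _ _ _ hcx, map_smul, hf0 n a x ha.symm]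
  have hb0 : ∀ x : D, ‖f0 x‖ ≤ ‖x‖ := by
    intro x
    have := hbound (idx x) (elt x)
    rw [helt x] at this
    simpa using this
  let F0lin : D →ₗ[ℂ] B :=
    { toFun := f0, map_add' := hf0add, map_smul' := hf0smul }
  let F0 : D →L[ℂ] B := LinearMap.mkContinuous F0lin 1 (fun x => by rw [one_mul]; exact hb0 x)
  let e : D →L[ℂ] Alim := D.subtypeL
  have hiso : Isometry (⇑e) := fun x y => rfl
  have hue : IsUniformInducing (⇑e) := hiso.isUniformInducing
  have hde : DenseRange (⇑e) := by
    have : Set.range (⇑e) = s := by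
      ext x; constructor
      · rintro ⟨y, rfl⟩; exact y.2
      · intro hx; exact ⟨⟨x, hx⟩, rfl⟩
    rw [DenseRange, this]; exact hdense
  let Fext : Alim →L[ℂ] B := F0.extend e
  have hFea : ∀ n (a : A n), Fext (φlim n a) = f n a := by
    intro n a
    have hm : φlim n a ∈ D := hmem n a
    have h1 := ContinuousLinearMap.extend_eq (f := F0) (e := e) hde hue ⟨φlim n a, hm⟩
    exact h1.trans (hf0 n a ⟨φlim n a, hm⟩ rfl)
  have hcont : Continuous Fext := Fext.continuous
  have hbnd : ∀ x : Alim, ‖Fext x‖ ≤ ‖x‖ := by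
    intro x
    have hclosed : IsClosed {x : Alim | ‖Fext x‖ ≤ ‖x‖} :=
      isClosed_le (continuous_norm.comp hcont) continuous_norm
    have hsub : s ⊆ {x : Alim | ‖Fext x‖ ≤ ‖x‖} := by
      rintro x hx
      obtain ⟨n, a, rfl⟩ := hrep x hx
      rw [Set.mem_setOf_eq, hFea n a]
      exact hbound n a
    have := hclosed.closure_subset_iff.mpr hsub
    exact this (hdense.closure_eq ▸ Set.mem_univ x)
  have hmul : ∀ x y : Alim, Fext (x * y) = Fext x * Fext y := by
    have hdd : Dense (s ×ˢ s) := hdense.prod hdense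
    have heq : (fun q : Alim × Alim => Fext (q.1 * q.2))
        = fun q : Alim × Alim => Fext q.1 * Fext q.2 := by
      refine Continuous.ext_on hdd
        (hcont.comp (continuous_fst.mul continuous_snd))
        ((hcont.comp continuous_fst).mul (hcont.comp continuous_snd)) ?_
      rintro ⟨x, y⟩ ⟨hx, hy⟩
      obtain ⟨n, a, rfl⟩ := hrep x hx
      obtain ⟨m, b, rfl⟩ := hrep y hy
      simp only
      rw [hφ' n _ (le_max_left n m) a, hφ' m _ (le_max_right n m) b, ← map_mul,
        hFea, hFea, hFea, map_mul]
    intro x y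
    exact congrFun heq (x, y)
  have hstar : ∀ x : Alim, Fext (star x) = star (Fext x) := by
    have heq : (fun x : Alim => Fext (star x)) = fun x : Alim => star (Fext x) := by
      refine Continuous.ext_on hdense (hcont.comp continuous_star)
        (continuous_star.comp hcont) ?_
      rintro x hx
      obtain ⟨n, a, rfl⟩ := hrep x hx
      simp only
      rw [← map_star, hFea, hFea, map_star]
    exact fun x => congrFun heq x
  refine ⟨{ toFun := ⇑Fext, map_smul' := map_smul Fext, map_zero' := map_zero Fext,
            map_add' := map_add Fext, map_mul' := hmul, map_star' := hstar }, ?_, ?_⟩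
  · intro n a; exact hFea n a
  · intro x; exact hbnd x

end GTLift
set_option synthInstance.maxHeartbeats 400000
set_option maxHeartbeats 1600000
universe u v w uB

/-- Sequential inductive limits exist in the proper cocycle category.
Given an inductive system of proper cocycle morphisms `(φ_n, u⁽ⁿ⁾)` between gently twisted
`G`-C*-algebras `(A_n, α⁽ⁿ⁾, 𝔲⁽ⁿ⁾)`, and a realization `(Alim, (φ_{n,∞})_n)` of the underlying
C*-inductive limit (with iterated connecting maps `chain` and the inductively defined
unitaries `𝕌⁽ⁿ⁾`), then:
(1) there is a unique gently twisted action `(α, 𝔲) : G ↷ Alim` with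
`α_g ∘ φ_{n,∞} = φ_{n,∞} ∘ Ad(𝕌⁽ⁿ⁾_g) ∘ α⁽ⁿ⁾_g` and `𝔲 = φ_{0,∞}† ∘ 𝔲⁽⁰⁾`;
(2) the pairs `(φ_{n,∞}, g ↦ φ_{n,∞}†(𝕌⁽ⁿ⁾_g)*)` are proper cocycle morphisms into the limit
and are compatible with the connecting maps;
(3) `(Alim, α, 𝔲)` with these morphisms satisfies the universal property of the inductive limit
in the proper cocycle category. -/
theorem gentlyTwisted_inductiveLimit
    {G : Type u} [Group G] [TopologicalSpace G] [IsTopologicalGroup G]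
    [LocallyCompactSpace G] [SecondCountableTopology G] [T2Space G]
    {A : ℕ → Type v} [∀ n, NonUnitalCStarAlgebra (A n)]
    (S : ∀ n, GentlyTwistedAction G (A n))
    (P : ∀ n, ProperCocycleMorphism (S n) (S (n + 1)))
    {Alim : Type w} [NonUnitalCStarAlgebra Alim]
    (φlim : ∀ n, A n →⋆ₙₐ[ℂ] Alim)
    -- the iterated connecting maps `φ_{n,m}` :
    (chain : ∀ n m : ℕ, A n →⋆ₙₐ[ℂ] A m)
    (hchain_refl : ∀ n, chain n n = NonUnitalStarAlgHom.id ℂ (A n))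
    (hchain_succ : ∀ n m, n ≤ m → chain n (m + 1) = (P m).φ.comp (chain n m))
    -- `(Alim, (φ_{n,∞})_n)` realizes the C*-inductive limit :
    (hcompat : ∀ n, φlim n = (φlim (n + 1)).comp (P n).φ)
    (hdense : Dense (⋃ n, Set.range (φlim n)))
    (hnorm : ∀ n (a : A n),
      Filter.Tendsto (fun m => ‖chain n m a‖) Filter.atTop (nhds ‖φlim n a‖))
    -- the inductively defined unitaries `𝕌⁽ⁿ⁾` :
    (U : ∀ n, G → Unitization ℂ (A n))
    (hU_zero : ∀ g, U 0 g = 1)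
    (hU_succ : ∀ n g, U (n + 1) g = (P n).φ.dag (U n g) * (P n).u g) :
    ∃ T : GentlyTwistedAction G Alim,
      -- (1) the characterizing properties of the limit action ...
      (∀ n (g : G) (a : A n),
        ((T.α g (φlim n a) : Alim) : Unitization ℂ Alim)
          = (φlim n).dag (U n g * (((S n).α g a : A n) : Unitization ℂ (A n)) * star (U n g))) ∧
      (∀ g h : G, T.u g h = (φlim 0).dag ((S 0).u g h)) ∧
      -- ... and their uniqueness :
      (∀ T' : GentlyTwistedAction G Alim,
        (∀ n (g : G) (a : A n),
          ((T'.α g (φlim n a) : Alim) : Unitization ℂ Alim)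
            = (φlim n).dag (U n g * (((S n).α g a : A n) : Unitization ℂ (A n))
                * star (U n g))) →
        (∀ g h : G, T'.u g h = (φlim 0).dag ((S 0).u g h)) →
        T'.α = T.α ∧ T'.u = T.u) ∧
      -- (2) the universal morphisms `(φ,u)_{n,∞}` are proper cocycle morphisms ...
      (∀ n, ∃ Q : ProperCocycleMorphism (S n) T,
        Q.φ = φlim n ∧ ∀ g : G, Q.u g = star ((φlim n).dag (U n g))) ∧
      -- ... satisfying `(φ,u)_{n,∞} = (φ,u)_{n+1,∞} ∘ (φ_n, u⁽ⁿ⁾)` :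
      (∀ n (g : G),
        star ((φlim n).dag (U n g))
          = (φlim (n + 1)).dag ((P n).u g) * star ((φlim (n + 1)).dag (U (n + 1) g))) ∧
      -- (3) the universal property :
      (∀ (B : Type uB) [NonUnitalCStarAlgebra B], ∀ (Sb : GentlyTwistedAction G B)
        (θ : ∀ n, ProperCocycleMorphism (S n) Sb),
        (∀ n, (θ n).φ = (θ (n + 1)).φ.comp (P n).φ) →
        (∀ n (g : G), (θ n).u g = (θ (n + 1)).φ.dag ((P n).u g) * (θ (n + 1)).u g) →
        ∃ ΘV : ProperCocycleMorphism T Sb,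
          (∀ n, ΘV.φ.comp (φlim n) = (θ n).φ ∧
            ∀ g : G, ΘV.φ.dag (star ((φlim n).dag (U n g))) * ΘV.u g = (θ n).u g) ∧
          (∀ ΘV' : ProperCocycleMorphism T Sb,
            (∀ n, ΘV'.φ.comp (φlim n) = (θ n).φ ∧
              ∀ g : G, ΘV'.φ.dag (star ((φlim n).dag (U n g))) * ΘV'.u g = (θ n).u g) →
            ΘV'.φ = ΘV.φ ∧ ΘV'.u = ΘV.u)) := by
  classical
  -- abbreviations
  have hφ' : ∀ n m, n ≤ m → ∀ a : A n, φlim n a = φlim m (chain n m a) := by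
    intro n m h a
    rw [GT.chain_of_le (fun n => (P n).φ) chain hchain_refl hchain_succ φlim hcompat n m h]
    rfl
  -- the unitaries `U n g` are in `U(1+Aₙ)`
  have hUU : ∀ n (g : G), IsU1 (U n g) := by
    intro n
    induction n with
    | zero => intro g; rw [hU_zero]; exact IsU1.one
    | succ n ih =>
      intro g; rw [hU_succ]
      exact (IsU1.starMap _ (ih g)).mul ((P n).u_mem g)
  have hUunit : ∀ n (g : G), U n g ∈ unitary (Unitization ℂ (A n)) := fun n g => (hUU n g).1
  -- continuity of `U n`
  have hUcont : ∀ n, Continuous (fun g => U n g) := by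
    intro n
    induction n with
    | zero =>
      have : (fun g : G => U 0 g) = fun _ => 1 := funext fun g => hU_zero g
      rw [this]; exact continuous_const
    | succ n ih =>
      have : (fun g : G => U (n + 1) g)
          = fun g => (P n).φ.dag (U n g) * (P n).u g := funext fun g => hU_succ n g
      rw [this]
      exact ((GT.starHomCont ((P n).φ.dag)).comp ih).mul (P n).u_cont
  -- `u⁽ⁿ⁾₁ = 1`
  have hu1 : ∀ n, (P n).u 1 = 1 := by
    intro n
    have hun := ((P n).u_mem 1).1
    have hid : ((S (n + 1)).α 1).dag ((P n).u 1) = (P n).u 1 :=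
      GT.starMap_eq_self (fun a => (S (n + 1)).α_one a) _
    have hc := (P n).cocycle 1 1
    rw [(S n).u_one_left 1, (S (n + 1)).u_one_left 1, map_one, hid, mul_one, one_mul] at hc
    rw [mul_assoc, Unitary.mul_star_self_of_mem hun, mul_one] at hc
    exact hc.symm
  have hU1 : ∀ n, U n 1 = 1 := by
    intro n
    induction n with
    | zero => exact hU_zero 1
    | succ n ih => rw [hU_succ, ih, hu1, map_one, mul_one]
  -- the level-`n` twisted automorphisms  `ρ n g = Ad(U n g) ∘ αⁿ_g`
  set ρ : ∀ n, G → (A n ≃⋆ₐ[ℂ] A n) :=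
    fun n g => ((S n).α g).trans (GT.cAd (hUunit n g)) with hρdef
  have hρ : ∀ n (g : G) (a : A n),
      ((ρ n g a : A n) : Unitization ℂ (A n)) = U n g * ↑((S n).α g a) * star (U n g) :=
    fun n g a => GT.inr_cAd (hUunit n g) ((S n).α g a)
  -- intertwining with the connecting maps
  have hinter : ∀ n (g : G) (a : A n), ρ (n + 1) g ((P n).φ a) = (P n).φ (ρ n g a) := by
    intro n g a
    have hun := ((P n).u_mem g).1
    apply Unitization.inr_injective (R := ℂ)
    rw [hρ]
    rw [show (((P n).φ (ρ n g a) : A (n + 1)) : Unitization ℂ (A (n + 1)))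
        = Unitization.starMap (P n).φ ↑(ρ n g a) from (Unitization.starMap_inr _ _).symm]
    rw [hρ, map_mul, map_mul, map_star, Unitization.starMap_inr]
    have h2 : (↑((S (n + 1)).α g ((P n).φ a)) : Unitization ℂ (A (n + 1)))
        = star ((P n).u g) * ↑((P n).φ ((S n).α g a)) * (P n).u g := by
      rw [← (P n).equivariance g a]
      simp only [mul_assoc, Unitary.star_mul_self_of_mem hun, mul_one, GT.cancel_left hun]
    rw [hU_succ, h2]
    simp only [star_mul, mul_assoc, GT.cancel_left' hun]
  have hinter' : ∀ n (g : G) (a : A n),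
      (ρ (n + 1) g).symm ((P n).φ a) = (P n).φ ((ρ n g).symm a) := by
    intro n g a
    have h := hinter n g ((ρ n g).symm a)
    rw [StarAlgEquiv.apply_symm_apply] at h
    have h2 := congrArg (ρ (n + 1) g).symm h
    rw [StarAlgEquiv.symm_apply_apply] at h2
    exact h2.symm
  -- lift to automorphisms of the limit
  have hfam : ∀ g n, (φlim n).comp (ρ n g : A n →⋆ₙₐ[ℂ] A n)
      = ((φlim (n + 1)).comp (ρ (n + 1) g : A (n + 1) →⋆ₙₐ[ℂ] A (n + 1))).comp
          ((fun n => (P n).φ) n) := by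
    intro g n
    ext a
    show φlim n (ρ n g a) = φlim (n + 1) (ρ (n + 1) g ((P n).φ a))
    rw [hinter n g a]
    conv_lhs => rw [hcompat n]
    rfl
  have hfaminv : ∀ g n, (φlim n).comp ((ρ n g).symm : A n →⋆ₙₐ[ℂ] A n)
      = ((φlim (n + 1)).comp ((ρ (n + 1) g).symm : A (n + 1) →⋆ₙₐ[ℂ] A (n + 1))).comp
          ((fun n => (P n).φ) n) := by
    intro g n
    ext a
    show φlim n ((ρ n g).symm a) = φlim (n + 1) ((ρ (n + 1) g).symm ((P n).φ a))
    rw [hinter' n g a]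
    conv_lhs => rw [hcompat n]
    rfl
  choose Tα0 hTα0 hTα0b using fun g : G =>
    GT.lift (fun n => (P n).φ) chain hchain_refl hchain_succ φlim hcompat hdense hnorm
      (fun n => (φlim n).comp (ρ n g : A n →⋆ₙₐ[ℂ] A n)) (hfam g)
  choose Tβ0 hTβ0 _hTβ0b using fun g : G =>
    GT.lift (fun n => (P n).φ) chain hchain_refl hchain_succ φlim hcompat hdense hnorm
      (fun n => (φlim n).comp ((ρ n g).symm : A n →⋆ₙₐ[ℂ] A n)) (hfaminv g)
  have hTα0' : ∀ (g : G) n a, Tα0 g (φlim n a) = φlim n (ρ n g a) := fun g n a => hTα0 g n a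
  have hTβ0' : ∀ (g : G) n a, Tβ0 g (φlim n a) = φlim n ((ρ n g).symm a) :=
    fun g n a => hTβ0 g n a
  have hlr : ∀ (g : G) (x : Alim), Tα0 g (Tβ0 g x) = x := by
    intro g
    have h := GT.unique_on φlim hdense (F := (Tα0 g) ∘ (Tβ0 g)) (G := id)
      ((GT.starHomCont (Tα0 g)).comp (GT.starHomCont (Tβ0 g))) continuous_id ?_
    · exact fun x => congrFun h x
    · intro n a
      show Tα0 g (Tβ0 g (φlim n a)) = φlim n a
      rw [hTβ0' g n a, hTα0' g n _, StarAlgEquiv.apply_symm_apply]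
  have hrl : ∀ (g : G) (x : Alim), Tβ0 g (Tα0 g x) = x := by
    intro g
    have h := GT.unique_on φlim hdense (F := (Tβ0 g) ∘ (Tα0 g)) (G := id)
      ((GT.starHomCont (Tβ0 g)).comp (GT.starHomCont (Tα0 g))) continuous_id ?_
    · exact fun x => congrFun h x
    · intro n a
      show Tβ0 g (Tα0 g (φlim n a)) = φlim n a
      rw [hTα0' g n a, hTβ0' g n _, StarAlgEquiv.symm_apply_apply]
  set Tα : G → (Alim ≃⋆ₐ[ℂ] Alim) := fun g =>
    { toFun := Tα0 g
      invFun := Tβ0 g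
      left_inv := hrl g
      right_inv := hlr g
      map_mul' := fun x y => map_mul (Tα0 g) x y
      map_add' := fun x y => map_add (Tα0 g) x y
      map_star' := fun x => map_star (Tα0 g) x
      map_smul' := fun c x => map_smul (Tα0 g) c x } with hTαdef
  have hTα : ∀ (g : G) n a, Tα g (φlim n a) = φlim n (ρ n g a) := fun g n a => hTα0 g n a
  -- dag-equivariance of the connecting morphisms on the unitization
  have hdagint : ∀ n (g : G) (x : Unitization ℂ (A n)),
      ((S (n + 1)).α g).dag (Unitization.starMap (P n).φ x)
        = star ((P n).u g) * Unitization.starMap (P n).φ (((S n).α g).dag x) * (P n).u g := by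
    intro n g x
    have hun := ((P n).u_mem g).1
    induction x using Unitization.ind with
    | inl_add_inr r a =>
      rw [map_add, map_add, map_add, map_add]
      rw [mul_add, add_mul]
      congr 1
      · rw [Unitization.starMap_inl, Unitization.starMap_inl]
        rw [AlgHomClass.commutes, AlgHomClass.commutes]
        rw [mul_assoc, Algebra.commutes, GT.cancel_left hun]
      · simp only [Unitization.starMap_inr, GT.equiv_hom_apply]
        rw [← (P n).equivariance g a]
        simp only [mul_assoc, Unitary.star_mul_self_of_mem hun, mul_one, GT.cancel_left hun]
  -- the key cocycle identity `(★)`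
  have hW : ∀ n (s t : G),
      Unitization.starMap (chain 0 n) ((S 0).u s t)
        = U n s * ((S n).α s).dag (U n t) * (S n).u s t * star (U n (s * t)) := by
    intro n
    induction n with
    | zero =>
      intro s t
      rw [hchain_refl 0, Unitization.starMap_id]
      simp only [hU_zero, map_one, star_one, one_mul, mul_one]
      rfl
    | succ n ih =>
      intro s t
      have hun := ((P n).u_mem s).1
      rw [hchain_succ 0 n (Nat.zero_le n), Unitization.starMap_comp]
      show Unitization.starMap (P n).φ (Unitization.starMap (chain 0 n) ((S 0).u s t)) = _
      rw [ih s t]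
      rw [map_mul, map_mul, map_mul, map_star]
      rw [(P n).cocycle s t]
      rw [hU_succ n s, hU_succ n t, hU_succ n (s * t)]
      rw [map_mul ((S (n + 1)).α s).dag, hdagint n s (U n t)]
      simp only [star_mul, mul_assoc, GT.cancel_left' hun]
  -- the limit cocycle
  set Tu : G → G → Unitization ℂ Alim :=
    fun g h => Unitization.starMap (φlim 0) ((S 0).u g h) with hTudef
  have hTuW : ∀ n (s t : G),
      Tu s t = Unitization.starMap (φlim n)
        (U n s * ((S n).α s).dag (U n t) * (S n).u s t * star (U n (s * t))) := by
    intro n s t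
    rw [← hW n s t]
    show Tu s t = (Unitization.starMap (φlim n)).comp (Unitization.starMap (chain 0 n))
      ((S 0).u s t)
    rw [← Unitization.starMap_comp]
    have h0 : φlim 0 = (φlim n).comp (chain 0 n) :=
      GT.chain_of_le (fun n => (P n).φ) chain hchain_refl hchain_succ φlim hcompat
        0 n (Nat.zero_le n)
    rw [hTudef, h0]
  -- continuity of the level automorphisms in the group variable
  have hρcont : ∀ n (a : A n), Continuous fun g => ρ n g a := by
    intro n a
    have h : (fun g => ρ n g a)
        = fun g => (U n g * ↑((S n).α g a) * star (U n g)).snd := by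
      funext g
      have h := congrArg (fun x : Unitization ℂ (A n) => x.snd) (hρ n g a)
      simpa using h
    rw [h]
    exact GT.continuous_usnd.comp
      (((hUcont n).mul ((Unitization.isometry_inr.continuous).comp ((S n).α_cont a))).mul
        (continuous_star.comp (hUcont n)))
  have hTαcont : ∀ a : Alim, Continuous fun g => Tα g a := by
    intro a
    rw [continuous_iff_continuousAt]
    intro g₀
    rw [ContinuousAt, Metric.tendsto_nhds]
    intro ε hε
    obtain ⟨x, hxs, hxd⟩ := hdense.exists_dist_lt a (by positivity : (0:ℝ) < ε / 4)
    obtain ⟨n, hn⟩ := Set.mem_iUnion.mp hxs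
    obtain ⟨b, rfl⟩ := hn
    have hc : Continuous fun g => Tα g (φlim n b) := by
      have : (fun g => Tα g (φlim n b)) = fun g => φlim n (ρ n g b) :=
        funext fun g => hTα g n b
      rw [this]
      exact (GT.starHomCont (φlim n)).comp (hρcont n b)
    have hev := Metric.tendsto_nhds.mp (hc.tendsto g₀) (ε / 2) (by positivity)
    filter_upwards [hev] with g hg
    have hb1 : ∀ g : G, dist (Tα g a) (Tα g (φlim n b)) < ε / 4 := by
      intro g'
      rw [dist_eq_norm]
      calc ‖Tα0 g' a - Tα0 g' (φlim n b)‖ = ‖Tα0 g' (a - φlim n b)‖ := by rw [map_sub]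
        _ ≤ ‖a - φlim n b‖ := hTα0b g' _
        _ = dist a (φlim n b) := (dist_eq_norm _ _).symm
        _ < ε / 4 := hxd
    calc dist (Tα g a) (Tα g₀ a)
        ≤ dist (Tα g a) (Tα g (φlim n b)) + dist (Tα g (φlim n b)) (Tα g₀ (φlim n b))
            + dist (Tα g₀ (φlim n b)) (Tα g₀ a) := dist_triangle4 _ _ _ _
      _ < ε / 4 + ε / 2 + ε / 4 := by
          refine add_lt_add (add_lt_add (hb1 g) hg) ?_
          rw [dist_comm]; exact hb1 g₀
      _ = ε := by ring
  -- `ρ` at the identity element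
  have hρ1 : ∀ n (a : A n), ρ n 1 a = a := by
    intro n a
    apply Unitization.inr_injective (R := ℂ)
    rw [hρ, hU1, (S n).α_one, star_one, one_mul, mul_one]
  have hTα1 : ∀ a : Alim, Tα 1 a = a := by
    have h := GT.unique_on φlim hdense (F := fun x => Tα 1 x) (G := id)
      (GT.starHomCont (Tα0 1)) continuous_id (fun n a => by
        show Tα 1 (φlim n a) = φlim n a
        rw [hTα, hρ1])
    exact fun a => congrFun h a
  -- coercion compatibility of `Tα` with `starMap`
  have hcompTα : ∀ (g : G) n, ((Tα g : Alim →⋆ₙₐ[ℂ] Alim)).comp (φlim n)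
      = (φlim n).comp (ρ n g : A n →⋆ₙₐ[ℂ] A n) := by
    intro g n; ext a; exact hTα g n a
  have hdagT : ∀ (g : G) n (x : Unitization ℂ (A n)),
      (Tα g).dag (Unitization.starMap (φlim n) x)
        = Unitization.starMap (φlim n)
            (Unitization.starMap (ρ n g : A n →⋆ₙₐ[ℂ] A n) x) := by
    intro g n x
    calc (Tα g).dag (Unitization.starMap (φlim n) x)
        = Unitization.starMap ((Tα g : Alim →⋆ₙₐ[ℂ] Alim).comp (φlim n)) x := by
          rw [Unitization.starMap_comp]; rfl
      _ = Unitization.starMap ((φlim n).comp (ρ n g : A n →⋆ₙₐ[ℂ] A n)) x := by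
          rw [hcompTα g n]
      _ = Unitization.starMap (φlim n)
            (Unitization.starMap (ρ n g : A n →⋆ₙₐ[ℂ] A n) x) := by
          rw [Unitization.starMap_comp]; rfl
  have hρ0 : ∀ g : G, ((ρ 0 g : A 0 →⋆ₙₐ[ℂ] A 0))
      = ((S 0).α g : A 0 →⋆ₙₐ[ℂ] A 0) := by
    intro g
    refine DFunLike.ext _ _ fun a => ?_
    show ρ 0 g a = (S 0).α g a
    apply Unitization.inr_injective (R := ℂ)
    rw [hρ, hU_zero, star_one, one_mul, mul_one]
  -- the coercion lemma for equivalences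
  have hinrE : ∀ n (e : A n ≃⋆ₐ[ℂ] A n) (a : A n),
      ((e a : A n) : Unitization ℂ (A n)) = e.dag ((a : A n) : Unitization ℂ (A n)) := by
    intro n e a
    exact (Unitization.starMap_inr (e : A n →⋆ₙₐ[ℂ] A n) a).symm
  -- the twisted multiplicativity, as an identity of functions
  have keymul : ∀ s t : G, (fun x : Alim => ((Tα s (Tα t x) : Alim) : Unitization ℂ Alim))
      = fun x => Tu s t * ↑(Tα (s * t) x) * star (Tu s t) := by
    intro s t
    refine GT.unique_on φlim hdense ?_ ?_ ?_
    · exact Unitization.isometry_inr.continuous.comp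
        ((GT.starHomCont (Tα0 s)).comp (GT.starHomCont (Tα0 t)))
    · exact (continuous_const.mul (Unitization.isometry_inr.continuous.comp
        (GT.starHomCont (Tα0 (s * t))))).mul continuous_const
    · intro n a
      show ((Tα s (Tα t (φlim n a)) : Alim) : Unitization ℂ Alim)
        = Tu s t * ↑(Tα (s * t) (φlim n a)) * star (Tu s t)
      rw [hTα t n a, hTα s n _, hTα (s * t) n a, hTuW n s t]
      rw [show ∀ b : A n, ((φlim n b : Alim) : Unitization ℂ Alim)
          = Unitization.starMap (φlim n) ((b : A n) : Unitization ℂ (A n)) from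
          fun b => (Unitization.starMap_inr _ _).symm]
      rw [show ((φlim n (ρ n (s * t) a) : Alim) : Unitization ℂ Alim)
          = Unitization.starMap (φlim n) ↑(ρ n (s * t) a) from
          (Unitization.starMap_inr _ _).symm]
      rw [← map_star, ← map_mul, ← map_mul]
      refine congrArg (Unitization.starMap (φlim n)) ?_
      rw [hρ n s _, hρ n (s * t) a, hinrE n ((S n).α s) (ρ n t a), hρ n t a,
        map_mul, map_mul, map_star, ← hinrE n ((S n).α s) ((S n).α t a), (S n).α_mul s t a]
      simp only [star_mul, star_star, mul_assoc, GT.cancel_left (hUunit n (s * t))]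
  -- the characterizing property of the limit action
  have hprop1 : ∀ n (g : G) (a : A n),
      ((Tα g (φlim n a) : Alim) : Unitization ℂ Alim)
        = Unitization.starMap (φlim n)
            (U n g * (((S n).α g a : A n) : Unitization ℂ (A n)) * star (U n g)) := by
    intro n g a
    rw [hTα g n a,
      show ((φlim n (ρ n g a) : Alim) : Unitization ℂ Alim)
          = Unitization.starMap (φlim n) ↑(ρ n g a) from (Unitization.starMap_inr _ _).symm,
      hρ n g a]
  -- `starMap` of the level automorphisms
  have hdagρ : ∀ n (g : G) (x : Unitization ℂ (A n)),
      Unitization.starMap (ρ n g : A n →⋆ₙₐ[ℂ] A n) x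
        = U n g * ((S n).α g).dag x * star (U n g) := by
    intro n g x
    induction x using Unitization.ind with
    | inl_add_inr r a =>
      rw [map_add, map_add, mul_add, add_mul]
      congr 1
      · rw [Unitization.starMap_inl, Unitization.starMap_inl]
        rw [mul_assoc, Algebra.commutes, GT.cancel_left' (hUunit n g)]
      · simp only [Unitization.starMap_inr, GT.equiv_hom_apply]
        exact hρ n g a
  -- assemble the gently twisted action on the limit
  refine ⟨{ α := Tα
            α_cont := hTαcont
            u := Tu
            u_mem := fun s t => IsU1.starMap (φlim 0) ((S 0).u_mem s t)
            u_cont := (GT.starHomCont ((φlim 0).dag)).comp (S 0).u_cont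
            α_one := hTα1
            α_mul := fun s t a => congrFun (keymul s t) a
            u_one_left := fun s => by
              show Unitization.starMap (φlim 0) ((S 0).u 1 s) = 1
              rw [(S 0).u_one_left, map_one]
            u_one_right := fun s => by
              show Unitization.starMap (φlim 0) ((S 0).u s 1) = 1
              rw [(S 0).u_one_right, map_one]
            u_cocycle := fun r s t => by
              show (Tα r).dag (Unitization.starMap (φlim 0) ((S 0).u s t))
                  * Unitization.starMap (φlim 0) ((S 0).u r (s * t))
                = Unitization.starMap (φlim 0) ((S 0).u r s)
                  * Unitization.starMap (φlim 0) ((S 0).u (r * s) t)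
              rw [hdagT r 0, hρ0 r, ← map_mul, ← map_mul]
              exact congrArg (Unitization.starMap (φlim 0)) ((S 0).u_cocycle r s t) },
        ?_, ?_, ?_, ?_, ?_, ?_⟩
  -- (1) the characterizing property
  · exact fun n g a => hprop1 n g a
  -- (1') the cocycle formula
  · exact fun g h => rfl
  -- (1'') uniqueness of the twisted action
  · intro T' h1 h2
    constructor
    · funext g
      refine DFunLike.ext _ _ fun x => ?_
      have h := GT.unique_on φlim hdense (F := fun x => T'.α g x) (G := fun x => Tα g x)
        (GT.starHomCont (T'.α g)) (GT.starHomCont (Tα0 g)) ?_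
      · exact congrFun h x
      · intro n a
        apply Unitization.inr_injective (R := ℂ)
        rw [h1 n g a, hprop1 n g a]
    · funext g h
      rw [h2 g h]
  -- (2) the canonical morphisms into the limit
  · intro n
    have hΦu : ∀ g : G, Unitization.starMap (φlim n) (U n g) ∈ unitary (Unitization ℂ Alim) :=
      fun g => GT.map_unitary (Unitization.starMap (φlim n)) (hUunit n g)
    have hD : ∀ g h : G, ((S n).α g).dag (U n h) ∈ unitary (Unitization ℂ (A n)) :=
      fun g h => GT.map_unitary (((S n).α g).dag) (hUunit n h)
    refine ⟨{ φ := φlim n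
              u := fun g => star (Unitization.starMap (φlim n) (U n g))
              u_mem := fun g => (IsU1.starMap _ (hUU n g)).star'
              u_cont := ((GT.starHomCont ((φlim n).dag)).comp (hUcont n)).star
              equivariance := ?_
              cocycle := ?_ }, rfl, fun g => rfl⟩
    · intro g a
      rw [star_star, hprop1 n g a, map_mul, map_mul, map_star, Unitization.starMap_inr]
      simp only [mul_assoc, GT.cancel_left (hΦu g),
        Unitary.star_mul_self_of_mem (hΦu g), mul_one]
    · intro g h
      show (φlim n).dag ((S n).u g h)
          = star (Unitization.starMap (φlim n) (U n g))
            * (Tα g).dag (star (Unitization.starMap (φlim n) (U n h)))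
            * Tu g h
            * star (star (Unitization.starMap (φlim n) (U n (g * h))))
      rw [star_star, map_star, hdagT g n (U n h), hdagρ n g (U n h), hTuW n g h,
        ← map_star (Unitization.starMap (φlim n)), ← map_star (Unitization.starMap (φlim n)),
        ← map_mul, ← map_mul, ← map_mul]
      refine congrArg (Unitization.starMap (φlim n)) ?_
      simp only [star_mul, star_star, mul_assoc, GT.cancel_left (hUunit n g),
        GT.cancel_left (hD g h), Unitary.star_mul_self_of_mem (hUunit n (g * h)), mul_one]
  -- (2') compatibility with the connecting morphisms
  · intro n g
    have hΘu : Unitization.starMap (φlim (n + 1)) ((P n).u g)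
        ∈ unitary (Unitization ℂ Alim) :=
      GT.map_unitary (Unitization.starMap (φlim (n + 1))) (((P n).u_mem g).1)
    have h1 : Unitization.starMap (φlim (n + 1)) (Unitization.starMap (P n).φ (U n g))
        = Unitization.starMap (φlim n) (U n g) := by
      calc Unitization.starMap (φlim (n + 1)) (Unitization.starMap (P n).φ (U n g))
          = Unitization.starMap ((φlim (n + 1)).comp (P n).φ) (U n g) := by
            rw [Unitization.starMap_comp]; rfl
        _ = Unitization.starMap (φlim n) (U n g) := by rw [← hcompat n]
    conv_rhs => rw [hU_succ n g]
    rw [map_mul, star_mul, GT.cancel_left' hΘu, h1]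
  -- (3) the universal property
  · intro B _instB Sb θ hθφ hθu
    -- the relation between the cocycle maps of the `θ n`
    have hv : ∀ n (g : G),
        (θ 0).u g = Unitization.starMap (θ n).φ (U n g) * (θ n).u g := by
      intro n
      induction n with
      | zero => intro g; rw [hU_zero, map_one, one_mul]
      | succ n ih =>
        intro g
        have hsm : Unitization.starMap (θ n).φ (U n g)
            = Unitization.starMap (θ (n + 1)).φ (Unitization.starMap (P n).φ (U n g)) := by
          calc Unitization.starMap (θ n).φ (U n g)
              = Unitization.starMap ((θ (n + 1)).φ.comp (P n).φ) (U n g) := by rw [← hθφ n]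
            _ = _ := by rw [Unitization.starMap_comp]; rfl
        rw [ih g, hθu n g, hsm, hU_succ n g, map_mul, mul_assoc]
    -- lift of the underlying morphisms
    obtain ⟨Θ, hΘ, hΘb⟩ := GT.lift (fun n => (P n).φ) chain hchain_refl hchain_succ φlim
      hcompat hdense hnorm (fun n => (θ n).φ) hθφ
    have hΘdag : ∀ n (x : Unitization ℂ (A n)),
        Unitization.starMap Θ (Unitization.starMap (φlim n) x)
          = Unitization.starMap (θ n).φ x := by
      intro n x
      have h1 : Θ.comp (φlim n) = (θ n).φ := by ext a; exact hΘ n a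
      calc Unitization.starMap Θ (Unitization.starMap (φlim n) x)
          = Unitization.starMap (Θ.comp (φlim n)) x := by rw [Unitization.starMap_comp]; rfl
        _ = Unitization.starMap (θ n).φ x := by rw [h1]
    have hθUu : ∀ n (g : G),
        Unitization.starMap (θ n).φ (U n g) ∈ unitary (Unitization ℂ B) :=
      fun n g => GT.map_unitary (Unitization.starMap (θ n).φ) (hUunit n g)
    -- equivariance of the lifted morphism
    have hΘequiv : ∀ (g : G) (x : Alim),
        (θ 0).u g * ((Sb.α g (Θ x) : B) : Unitization ℂ B) * star ((θ 0).u g)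
          = ((Θ (Tα g x) : B) : Unitization ℂ B) := by
      intro g
      have h := GT.unique_on φlim hdense
        (F := fun x => (θ 0).u g * ((Sb.α g (Θ x) : B) : Unitization ℂ B)
          * star ((θ 0).u g))
        (G := fun x => ((Θ (Tα g x) : B) : Unitization ℂ B)) ?_ ?_ ?_
      · exact fun x => congrFun h x
      · exact (continuous_const.mul (Unitization.isometry_inr.continuous.comp
          ((GT.starHomCont (Sb.α g)).comp (GT.starHomCont Θ)))).mul continuous_const
      · exact Unitization.isometry_inr.continuous.comp
          ((GT.starHomCont Θ).comp (GT.starHomCont (Tα0 g)))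
      · intro n a
        rw [hTα g n a, hΘ n (ρ n g a), hΘ n a]
        rw [show ((((fun n => (θ n).φ) n) (ρ n g a) : B) : Unitization ℂ B)
            = Unitization.starMap (θ n).φ ↑(ρ n g a) from (Unitization.starMap_inr _ _).symm]
        rw [hρ n g a, map_mul, map_mul, map_star, Unitization.starMap_inr]
        rw [← (θ n).equivariance g a, hv n g]
        simp only [star_mul, mul_assoc]
    refine ⟨{ φ := Θ
              u := (θ 0).u
              u_mem := (θ 0).u_mem
              u_cont := (θ 0).u_cont
              equivariance := fun g a => hΘequiv g a
              cocycle := fun g h => ?_ }, ?_, ?_⟩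
    · show Unitization.starMap Θ (Unitization.starMap (φlim 0) ((S 0).u g h))
        = (θ 0).u g * (Sb.α g).dag ((θ 0).u h) * Sb.u g h * star ((θ 0).u (g * h))
      rw [hΘdag 0]
      exact (θ 0).cocycle g h
    · intro n
      refine ⟨by ext a; exact hΘ n a, fun g => ?_⟩
      show Unitization.starMap Θ (star (Unitization.starMap (φlim n) (U n g))) * (θ 0).u g
        = (θ n).u g
      rw [map_star, hΘdag n (U n g), hv n g, GT.cancel_left (hθUu n g)]
    · intro ΘV' hyp
      constructor
      · refine DFunLike.ext _ _ fun x => ?_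
        have h := GT.unique_on φlim hdense (F := fun x => ΘV'.φ x) (G := fun x => Θ x)
          (GT.starHomCont ΘV'.φ) (GT.starHomCont Θ) ?_
        · exact congrFun h x
        · intro n a
          exact (DFunLike.congr_fun (hyp n).1 a).trans (hΘ n a).symm
      · funext g
        have h0 := (hyp 0).2 g
        simp only [hU_zero, map_one, star_one, one_mul] at h0
        exact h0
end

section
/- Let G be a second-countable locally compact Hausdorff group and let (α,𝔲): G ↷ A and (β,𝔳): G ↷ B be twisted actions on separable unital C*-algebras. Suppose (φ,u): (A,α,𝔲) → (B,β,𝔳) and (ψ,v): (B,β,𝔳) → (A,α,𝔲) are cocycle morphisms such that (id_A, 1) ⪅ᵤ (ψ,v)∘(φ,u) and (id_B, 1) ⪅ᵤ (φ,u)∘(ψ,v). Then there exist cocycle conjugacies (Φ,U): (A,α,𝔲) → (B,β,𝔳) and (Ψ,V): (B,β,𝔳) → (A,α,𝔲) which are mutually inverse (i.e., Ψ = Φ⁻¹ and V_g = Φ⁻¹(U_g)* for all g ∈ G) and satisfy (Φ,U) ⪅ᵤ (φ,u) and (Ψ,V) ⪅ᵤ (ψ,v). -/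
noncomputable section Helpers

open scoped Filter Topology
open Filter

namespace TSI

variable {G : Type*} [Group G] [TopologicalSpace G]
variable {A B C : Type*} [CStarAlgebra A] [CStarAlgebra B] [CStarAlgebra C]

/-! ### basic norm helpers -/

lemma tri (x y z : A) : ‖x - z‖ ≤ ‖x - y‖ + ‖y - z‖ := by
  simpa [dist_eq_norm] using dist_triangle x y z

lemma norm_unitary_mul {w : A} (hw : w ∈ unitary A) (x : A) : ‖w * x‖ = ‖x‖ :=
  CStarRing.norm_mem_unitary_mul x hw

lemma norm_mul_unitary {w : A} (hw : w ∈ unitary A) (x : A) : ‖x * w‖ = ‖x‖ :=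
  CStarRing.norm_mul_mem_unitary x hw

lemma norm_conj_unitary {w : A} (hw : w ∈ unitary A) (x : A) : ‖w * x * star w‖ = ‖x‖ := by
  rw [norm_mul_unitary (Unitary.star_mem hw), norm_unitary_mul hw]

lemma hom_lip (φ : A →⋆ₙₐ[ℂ] B) (x y : A) : ‖φ x - φ y‖ ≤ ‖x - y‖ := by
  rw [← map_sub]; exact NonUnitalStarAlgHom.norm_apply_le φ _

lemma hom_cont (φ : A →⋆ₙₐ[ℂ] B) : Continuous φ := by
  refine (LipschitzWith.of_dist_le_mul (K := 1) fun x y => ?_).continuous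
  simpa [dist_eq_norm] using hom_lip φ x y

/-! ### plusMap lemmas -/

lemma plusMap_one (φ : A →⋆ₙₐ[ℂ] B) : plusMap φ 1 = 1 := by
  simp [plusMap]

lemma plusMap_mul (φ : A →⋆ₙₐ[ℂ] B) (x y : A) :
    plusMap φ x * plusMap φ y = plusMap φ (x * y) := by
  simp only [plusMap, sub_mul, mul_sub, add_mul, mul_add, mul_one, one_mul, ← map_mul,
    mul_one, one_mul]
  abel

lemma plusMap_star (φ : A →⋆ₙₐ[ℂ] B) (x : A) :
    plusMap φ (star x) = star (plusMap φ x) := by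
  have h1 : star (φ 1) = φ 1 := by rw [← map_star, star_one]
  simp [plusMap, star_sub, star_add, map_star, h1]

lemma plusMap_mem_unitary (φ : A →⋆ₙₐ[ℂ] B) {x : A} (hx : x ∈ unitary A) :
    plusMap φ x ∈ unitary B := by
  constructor
  · rw [← plusMap_star, plusMap_mul, Unitary.star_mul_self_of_mem hx, plusMap_one]
  · rw [← plusMap_star, plusMap_mul, Unitary.mul_star_self_of_mem hx, plusMap_one]

lemma plusMap_mul_map (φ : A →⋆ₙₐ[ℂ] B) (x y : A) : plusMap φ x * φ y = φ (x * y) := by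
  simp only [plusMap, sub_mul, add_mul, one_mul, ← map_mul, one_mul]
  abel

lemma map_mul_plusMap (φ : A →⋆ₙₐ[ℂ] B) (x y : A) : φ y * plusMap φ x = φ (y * x) := by
  simp only [plusMap, mul_sub, mul_add, mul_one, ← map_mul, mul_one]
  abel

lemma plusMap_lip (φ : A →⋆ₙₐ[ℂ] B) (x y : A) :
    ‖plusMap φ x - plusMap φ y‖ ≤ ‖x - y‖ := by
  have h : plusMap φ x - plusMap φ y = φ x - φ y := by simp only [plusMap]; abel
  rw [h]; exact hom_lip φ x y

lemma plusMap_plusMap (φ : B →⋆ₙₐ[ℂ] C) (ψ : A →⋆ₙₐ[ℂ] B) (x : A) :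
    plusMap φ (plusMap ψ x) = plusMap φ (ψ x) + 1 - plusMap φ (ψ 1) := by
  simp only [plusMap, map_sub, map_add]
  abel

end TSI

end Helpers

noncomputable section Helpers2

namespace TSI

variable {G : Type*} [Group G] [TopologicalSpace G]
variable {A B C : Type*} [CStarAlgebra A] [CStarAlgebra B] [CStarAlgebra C]

lemma unit_cancel₁ {w : A} (hw : w ∈ unitary A) (x : A) : star w * (w * x) = x := by
  rw [← mul_assoc, Unitary.star_mul_self_of_mem hw, one_mul]

lemma unit_cancel₂ {w : A} (hw : w ∈ unitary A) (x : A) : w * (star w * x) = x := by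
  rw [← mul_assoc, Unitary.mul_star_self_of_mem hw, one_mul]

lemma equiv_unitary (e : A ≃⋆ₐ[ℂ] A) {w : A} (hw : w ∈ unitary A) : e w ∈ unitary A := by
  constructor
  · rw [← map_star, ← map_mul, Unitary.star_mul_self_of_mem hw, map_one]
  · rw [← map_star, ← map_mul, Unitary.mul_star_self_of_mem hw, map_one]

/-- conjugation by a unitary as a non-unital star homomorphism. -/
def innerAut {w : A} (hw : w ∈ unitary A) : A →⋆ₙₐ[ℂ] A where
  toFun x := w * x * star w
  map_smul' c x := by simp [mul_smul_comm, smul_mul_assoc]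
  map_zero' := by simp
  map_add' x y := by simp [mul_add, add_mul]
  map_mul' x y := by
    simp only [mul_assoc, unit_cancel₁ hw]
  map_star' x := by simp [star_mul, mul_assoc]

lemma innerAut_apply {w : A} (hw : w ∈ unitary A) (x : A) :
    innerAut hw x = w * x * star w := rfl

lemma plusMap_conj {w : B} (hw : w ∈ unitary B) (φ : A →⋆ₙₐ[ℂ] B) (x : A) :
    plusMap ((innerAut hw).comp φ) x = w * plusMap φ x * star w := by
  have h1 : (innerAut hw).comp φ = fun y => w * φ y * star w := rfl
  simp only [plusMap, NonUnitalStarAlgHom.comp_apply, innerAut_apply, mul_sub, sub_mul,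
    mul_add, add_mul, mul_one, one_mul]
  rw [Unitary.mul_star_self_of_mem hw]
  try abel

variable {Sa : TwistedAction G A} {Sb : TwistedAction G B} {Sc : TwistedAction G C}

/-- Perturbation of a cocycle morphism by a unitary. -/
def _root_.CocycleMorphism.perturb (M : CocycleMorphism Sa Sb) {w : B} (hw : w ∈ unitary B) :
    CocycleMorphism Sa Sb where
  φ := (innerAut hw).comp M.φ
  u g := w * M.u g * star (Sb.α g w)
  u_mem g := by
    exact mul_mem (mul_mem hw (M.u_mem g))
      (Unitary.star_mem (equiv_unitary (Sb.α g) hw))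
  u_cont := by
    exact (continuous_const.mul M.u_cont).mul (Continuous.star (Sb.α_cont w))
  equivariance g a := by
    conv_rhs => rw [NonUnitalStarAlgHom.comp_apply, ← M.equivariance g a]
    simp only [NonUnitalStarAlgHom.comp_apply, innerAut_apply, map_mul, map_star,
      star_mul, star_star, mul_assoc,
      unit_cancel₁ (equiv_unitary (Sb.α g) hw), unit_cancel₂ (equiv_unitary (Sb.α g) hw),
      unit_cancel₁ hw, unit_cancel₂ hw]
  cocycle g h := by
    rw [plusMap_conj hw, M.cocycle g h]
    simp only [map_mul, map_star, star_mul, star_star, Sb.α_mul g h w, mul_assoc,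
      unit_cancel₁ (equiv_unitary (Sb.α g) hw), unit_cancel₂ (equiv_unitary (Sb.α g) hw),
      unit_cancel₁ (equiv_unitary (Sb.α (g*h)) hw), unit_cancel₂ (equiv_unitary (Sb.α (g*h)) hw),
      unit_cancel₁ (Sb.u_mem g h), unit_cancel₂ (Sb.u_mem g h),
      unit_cancel₁ hw, unit_cancel₂ hw]

lemma perturb_φ_apply (M : CocycleMorphism Sa Sb) {w : B} (hw : w ∈ unitary B) (a : A) :
    (M.perturb hw).φ a = w * M.φ a * star w := rfl

lemma perturb_u_apply (M : CocycleMorphism Sa Sb) {w : B} (hw : w ∈ unitary B) (g : G) :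
    (M.perturb hw).u g = w * M.u g * star (Sb.α g w) := rfl

/-- equivariance for the unitized map. -/
lemma plus_equivariance (M : CocycleMorphism Sa Sb) (g : G) (x : A) :
    plusMap M.φ (Sa.α g x) = M.u g * Sb.α g (plusMap M.φ x) * star (M.u g) := by
  have e0 : M.u g * Sb.α g (M.φ 1) * star (M.u g) = M.φ 1 := by
    have := M.equivariance g 1; rwa [map_one (Sa.α g)] at this
  simp only [plusMap, map_add, map_sub, map_one, mul_add, add_mul, mul_sub, sub_mul,
    mul_one, one_mul]
  rw [M.equivariance g x, e0, Unitary.mul_star_self_of_mem (M.u_mem g)]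

/-- Composition of cocycle morphisms. -/
def _root_.CocycleMorphism.comp (M : CocycleMorphism Sb Sc) (N : CocycleMorphism Sa Sb) :
    CocycleMorphism Sa Sc where
  φ := M.φ.comp N.φ
  u g := plusMap M.φ (N.u g) * M.u g
  u_mem g := mul_mem (plusMap_mem_unitary M.φ (N.u_mem g)) (M.u_mem g)
  u_cont := by
    have h : Continuous fun g => plusMap M.φ (N.u g) :=
      (((hom_cont M.φ).comp N.u_cont).add continuous_const).sub continuous_const
    exact h.mul M.u_cont
  equivariance g a := by
    have h1 : ∀ x : B, M.u g * Sc.α g (M.φ x) * star (M.u g) = M.φ (Sb.α g x) :=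
      M.equivariance g
    calc plusMap M.φ (N.u g) * M.u g * Sc.α g ((M.φ.comp N.φ) a) *
          star (plusMap M.φ (N.u g) * M.u g)
        = plusMap M.φ (N.u g) * (M.u g * Sc.α g (M.φ (N.φ a)) * star (M.u g)) *
            star (plusMap M.φ (N.u g)) := by
          simp only [NonUnitalStarAlgHom.comp_apply, star_mul, mul_assoc]
      _ = plusMap M.φ (N.u g) * M.φ (Sb.α g (N.φ a)) * plusMap M.φ (star (N.u g)) := by
          rw [h1, plusMap_star]
      _ = M.φ (N.u g * Sb.α g (N.φ a) * star (N.u g)) := by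
          rw [plusMap_mul_map, map_mul_plusMap, mul_assoc]
      _ = (M.φ.comp N.φ) (Sa.α g a) := by rw [N.equivariance g a]; rfl
  cocycle g h := by
    have hcomp : plusMap (M.φ.comp N.φ) (Sa.u g h) = plusMap M.φ (plusMap N.φ (Sa.u g h)) := by
      simp only [plusMap, map_sub, map_add, NonUnitalStarAlgHom.comp_apply]
      abel
    rw [hcomp, N.cocycle g h, ← plusMap_mul, ← plusMap_mul, ← plusMap_mul, plusMap_star,
      plus_equivariance M g (N.u h), M.cocycle g h]
    simp only [star_mul, star_star, map_mul, mul_assoc,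
      unit_cancel₁ (M.u_mem g), unit_cancel₂ (M.u_mem g)]

lemma comp_φ_apply (M : CocycleMorphism Sb Sc) (N : CocycleMorphism Sa Sb) (a : A) :
    (M.comp N).φ a = M.φ (N.φ a) := rfl

lemma comp_u_apply (M : CocycleMorphism Sb Sc) (N : CocycleMorphism Sa Sb) (g : G) :
    (M.comp N).u g = plusMap M.φ (N.u g) * M.u g := rfl

end TSI

end Helpers2

noncomputable section Helpers3

namespace TSI

variable {G : Type*} [Group G] [TopologicalSpace G]
variable {A B C : Type*} [CStarAlgebra A] [CStarAlgebra B] [CStarAlgebra C]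
variable {Sa : TwistedAction G A} {Sb : TwistedAction G B} {Sc : TwistedAction G C}

lemma comp_perturb_φ (M : CocycleMorphism Sb Sc) (N : CocycleMorphism Sa Sb) {X : C}
    (hX : X ∈ unitary C) (a : A) :
    ((M.perturb hX).comp N).φ a = X * (M.comp N).φ a * star X := rfl

lemma comp_perturb_u (M : CocycleMorphism Sb Sc) (N : CocycleMorphism Sa Sb) {X : C}
    (hX : X ∈ unitary C) (g : G) :
    ((M.perturb hX).comp N).u g = X * (M.comp N).u g * star (Sc.α g X) := by
  show plusMap ((innerAut hX).comp M.φ) (N.u g) * (X * M.u g * star (Sc.α g X)) = _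
  rw [plusMap_conj hX M.φ]
  simp only [comp_u_apply, mul_assoc, unit_cancel₁ hX]

lemma perturb_comp_φ (M : CocycleMorphism Sb Sc) (N : CocycleMorphism Sa Sb) {w : B}
    (hw : w ∈ unitary B) (a : A) :
    (M.comp (N.perturb hw)).φ a
      = plusMap M.φ w * (M.comp N).φ a * star (plusMap M.φ w) := by
  show M.φ (w * N.φ a * star w) = _
  conv_rhs => rw [comp_φ_apply, ← plusMap_star, plusMap_mul_map, map_mul_plusMap]

lemma perturb_comp_u (M : CocycleMorphism Sb Sc) (N : CocycleMorphism Sa Sb) {w : B}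
    (hw : w ∈ unitary B) (g : G) :
    (M.comp (N.perturb hw)).u g
      = plusMap M.φ w * (M.comp N).u g * star (Sc.α g (plusMap M.φ w)) := by
  show plusMap M.φ (w * N.u g * star (Sb.α g w)) * M.u g = _
  rw [← plusMap_mul, ← plusMap_mul, plusMap_star, plus_equivariance M g w]
  simp only [comp_u_apply, star_mul, star_star, mul_assoc,
    unit_cancel₁ (M.u_mem g), unit_cancel₂ (M.u_mem g),
    Unitary.star_mul_self_of_mem (M.u_mem g), mul_one]

lemma conj_conj (z w x : A) :
    (z * w) * x * star (z * w) = z * (w * x * star w) * star z := by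
  simp [star_mul, mul_assoc]

lemma conj_conj_u (S : TwistedAction G A) (g : G) (z w x : A) :
    (z * w) * x * star (S.α g (z * w)) = z * (w * x * star (S.α g w)) * star (S.α g z) := by
  simp [map_mul, star_mul, mul_assoc]

lemma approx_congr {S : TwistedAction G B} {ψ v f u f' u' : _}
    (hf : ∀ a : A, f a = f' a) (hu : ∀ g : G, u g = u' g)
    (h : ApproxUDom S ψ v f u) : ApproxUDom S ψ v f' u' := by
  intro ε hε F K hK
  obtain ⟨w, hw, h1, h2⟩ := h ε hε F K hK
  exact ⟨w, hw, fun a ha => by rw [← hf a]; exact h1 a ha,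
    fun g hg => by rw [← hu g]; exact h2 g hg⟩

lemma approx_conj {S : TwistedAction G A} {f : A → A} {u : G → A} {c : A}
    (hc : c ∈ unitary A)
    (h : ApproxUDom S (fun a => a) (fun _ => 1) f u) :
    ApproxUDom S (fun a => a) (fun _ => 1)
      (fun a => c * f a * star c) (fun g => c * u g * star (S.α g c)) := by
  intro ε hε F K hK
  obtain ⟨w, hw, h1, h2⟩ := h ε hε F K hK
  refine ⟨w * star c, mul_mem hw (Unitary.star_mem hc), fun a ha => ?_, fun g hg => ?_⟩
  · have key : (w * star c) * (c * f a * star c) * star (w * star c)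
        = w * f a * star w := by
      simp only [star_mul, star_star, mul_assoc, unit_cancel₁ hc, unit_cancel₂ hc]
    rw [key]; exact h1 a ha
  · have key : (w * star c) * (c * u g * star (S.α g c)) * star (S.α g (w * star c))
        = w * u g * star (S.α g w) := by
      simp only [map_mul, map_star, star_mul, star_star, mul_assoc, unit_cancel₁ hc,
        unit_cancel₂ hc, unit_cancel₁ (equiv_unitary (S.α g) hc),
        unit_cancel₂ (equiv_unitary (S.α g) hc)]
    rw [key]; exact h2 g hg

lemma exists_net {s : Set A} (hs : IsCompact s) {δ : ℝ} (hδ : 0 < δ) :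
    ∃ F : Finset A, ∀ x ∈ s, ∃ y ∈ F, ‖x - y‖ ≤ δ := by
  obtain ⟨t, -, htf, hcov⟩ := finite_cover_balls_of_compact hs hδ
  refine ⟨htf.toFinset, fun x hx => ?_⟩
  have := hcov hx
  simp only [Set.mem_iUnion, Metric.mem_ball] at this
  obtain ⟨y, hyt, hxy⟩ := this
  exact ⟨y, htf.mem_toFinset.2 hyt, by rw [← dist_eq_norm]; exact hxy.le⟩

end TSI

end Helpers3

noncomputable section Helpers3b

namespace TSI

variable {G : Type*} [Group G] [TopologicalSpace G]
variable {A B : Type*} [CStarAlgebra A] [CStarAlgebra B]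

lemma unit_close₁ {s x : A} (hs : s ∈ unitary A) : ‖x - star s‖ = ‖1 - s * x‖ := by
  calc ‖x - star s‖ = ‖s * (x - star s)‖ := (norm_unitary_mul hs _).symm
    _ = ‖s * x - 1‖ := by rw [mul_sub, Unitary.mul_star_self_of_mem hs]
    _ = ‖1 - s * x‖ := norm_sub_rev _ _

lemma norm_sub_star (x y : A) : ‖star x - star y‖ = ‖x - y‖ := by
  rw [← star_sub, norm_star]

lemma plus_plus_sub (φ : A →⋆ₙₐ[ℂ] B) (ψ : B →⋆ₙₐ[ℂ] A) (y : B) :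
    plusMap φ (plusMap ψ y) - y = (φ (ψ y) - y) + (1 - φ (ψ 1)) := by
  simp only [plusMap, map_sub, map_add]
  abel

/-- Key quantitative estimate: if the composite is pointwise `ε`-close to the identity on a
finite set containing `1` and an `ε`-net of a set `s`, then the unitized composite moves any
point of `s` by at most `4ε`. -/
lemma plus_plus_close (φ : A →⋆ₙₐ[ℂ] B) (ψ : B →⋆ₙₐ[ℂ] A) {F : Finset B} {ε : ℝ}
    (hF1 : (1 : B) ∈ F) (hFe : ∀ b ∈ F, ‖b - φ (ψ b)‖ ≤ ε)
    {y : B} (hnet : ∃ b ∈ F, ‖y - b‖ ≤ ε) :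
    ‖plusMap φ (plusMap ψ y) - y‖ ≤ 4 * ε := by
  obtain ⟨b, hbF, hby⟩ := hnet
  have h1 : ‖φ (ψ y) - y‖ ≤ 3 * ε := by
    have l1 : ‖φ (ψ y) - φ (ψ b)‖ ≤ ε := le_trans (le_trans (hom_lip φ _ _) (hom_lip ψ _ _)) hby
    have l2 : ‖φ (ψ b) - b‖ ≤ ε := by rw [norm_sub_rev]; exact hFe b hbF
    calc ‖φ (ψ y) - y‖ ≤ ‖φ (ψ y) - φ (ψ b)‖ + ‖φ (ψ b) - y‖ := tri _ _ _
      _ ≤ ε + (‖φ (ψ b) - b‖ + ‖b - y‖) := add_le_add l1 (tri _ _ _)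
      _ ≤ ε + (ε + ε) := by
          refine add_le_add (le_refl ε) (add_le_add l2 ?_)
          rw [norm_sub_rev]; exact hby
      _ = 3 * ε := by ring
  have h2 : ‖(1 : B) - φ (ψ 1)‖ ≤ ε := by simpa using hFe 1 hF1
  calc ‖plusMap φ (plusMap ψ y) - y‖ = ‖(φ (ψ y) - y) + (1 - φ (ψ 1))‖ := by
        rw [plus_plus_sub]
    _ ≤ ‖φ (ψ y) - y‖ + ‖1 - φ (ψ 1)‖ := norm_add_le _ _
    _ ≤ 3 * ε + ε := add_le_add h1 h2
    _ = 4 * ε := by ring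

end TSI

end Helpers3b

noncomputable section Helpers4

namespace TSI

variable {G : Type*} [Group G] [TopologicalSpace G]
variable {A B : Type*} [CStarAlgebra A] [CStarAlgebra B]
variable {Sα : TwistedAction G A} {Sβ : TwistedAction G B}

/-- The inductive step of the two-sided Elliott intertwining argument. -/
lemma step_ex (P : CocycleMorphism Sα Sβ) (Q : CocycleMorphism Sβ Sα)
    (hA : ApproxUDom Sα (fun a => a) (fun _ => 1) ((Q.comp P).φ) ((Q.comp P).u))
    (hB : ApproxUDom Sβ (fun b => b) (fun _ => 1) ((P.comp Q).φ) ((P.comp Q).u))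
    (seqA : ℕ → A) (seqB : ℕ → B) (Kn : Set G) (hKn : IsCompact Kn)
    (n : ℕ) {ε : ℝ} (hε : 0 < ε)
    {W : B} (hW : W ∈ unitary B) {X : A} (hX : X ∈ unitary A) :
    ∃ (W' : B) (hW' : W' ∈ unitary B) (X' : A) (hX' : X' ∈ unitary A),
      (∀ i ≤ n, ‖seqA i - (Q.perturb hX').φ ((P.perturb hW).φ (seqA i))‖ ≤ ε) ∧
      (∀ i ≤ n, ‖seqB i - (P.perturb hW').φ ((Q.perturb hX').φ (seqB i))‖ ≤ ε) ∧
      (∀ i ≤ n, ‖(P.perturb hW').φ (seqA i) - (P.perturb hW).φ (seqA i)‖ ≤ 2 * ε) ∧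
      (∀ i ≤ n, ‖(Q.perturb hX').φ (seqB i) - (Q.perturb hX).φ (seqB i)‖
          ≤ ε + ‖seqB i - (P.perturb hW).φ ((Q.perturb hX).φ (seqB i))‖) ∧
      (∀ g ∈ Kn, ‖(P.perturb hW').u g - (P.perturb hW).u g‖ ≤ 6 * ε) ∧
      (∀ g ∈ Kn, ‖(Q.perturb hX').u g - (Q.perturb hX).u g‖
          ≤ 5 * ε + ‖1 - plusMap (P.perturb hW).φ ((Q.perturb hX).u g) * (P.perturb hW).u g‖) ∧
      (∀ g ∈ Kn, ‖1 - plusMap (P.perturb hW').φ ((Q.perturb hX').u g) * (P.perturb hW').u g‖ ≤ ε) ∧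
      (∀ g ∈ Kn, ‖1 - plusMap (Q.perturb hX').φ ((P.perturb hW).u g) * (Q.perturb hX').u g‖ ≤ ε) := by
  classical
  -- abbreviations
  let Pn := P.perturb hW
  let Qn := Q.perturb hX
  -- the A-side composite is a unitary conjugate of `Q ∘ P`
  have hA1 : ApproxUDom Sα (fun a => a) (fun _ => 1) ((Qn.comp Pn).φ) ((Qn.comp Pn).u) := by
    have step1 := approx_conj (plusMap_mem_unitary Q.φ hW) hA
    have step1' := approx_congr (fun a => (perturb_comp_φ Q P hW a).symm)
      (fun g => (perturb_comp_u Q P hW g).symm) step1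
    have step2 := approx_conj hX step1'
    exact approx_congr (fun a => (comp_perturb_φ Q Pn hX a).symm)
      (fun g => (comp_perturb_u Q Pn hX g).symm) step2
  -- finite nets for the cocycles on `Kn`
  obtain ⟨NF, hNF⟩ := exists_net (hKn.image ((Continuous.star Qn.u_cont))) hε (A := A)
  obtain ⟨NG, hNG⟩ := exists_net (hKn.image ((Continuous.star Pn.u_cont))) hε (A := B)
  -- the A-side finite set
  let F : Finset A := (((Finset.range (n+1)).image seqA ∪
      (Finset.range (n+1)).image (fun i => Qn.φ (seqB i))) ∪ NF) ∪ {1}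
  have hF1 : (1 : A) ∈ F := Finset.mem_union_right _ (Finset.mem_singleton_self 1)
  have hFA : ∀ i ≤ n, seqA i ∈ F := fun i hi =>
    Finset.mem_union_left _ (Finset.mem_union_left _ (Finset.mem_union_left _
      (Finset.mem_image_of_mem seqA (Finset.mem_range.2 (Nat.lt_succ_of_le hi)))))
  have hFB : ∀ i ≤ n, Qn.φ (seqB i) ∈ F := fun i hi =>
    Finset.mem_union_left _ (Finset.mem_union_left _ (Finset.mem_union_right _
      (Finset.mem_image_of_mem _ (Finset.mem_range.2 (Nat.lt_succ_of_le hi)))))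
  have hFN : ∀ x ∈ NF, x ∈ F := fun x hx =>
    Finset.mem_union_left _ (Finset.mem_union_right _ hx)
  -- choose the A-side unitary
  obtain ⟨w, hw, hw1, hw2⟩ := hA1 ε hε F Kn hKn
  have hX' : w * X ∈ unitary A := mul_mem hw hX
  let Q' := Q.perturb hX'
  have idQ'φ : ∀ y : B, Q'.φ y = w * Qn.φ y * star w := fun y =>
    conj_conj w X (Q.φ y)
  have idQ'u : ∀ g : G, Q'.u g = w * Qn.u g * star (Sα.α g w) := fun g =>
    conj_conj_u Sα g w X (Q.u g)
  -- elementwise and cocycle consequences of the choice of `w`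
  have hws : ∀ a ∈ F, ‖a - Q'.φ (Pn.φ a)‖ ≤ ε := by
    intro a ha
    have := hw1 a ha
    rw [idQ'φ (Pn.φ a)]
    exact this
  have hwc : ∀ g ∈ Kn, ‖1 - plusMap Q'.φ (Pn.u g) * Q'.u g‖ ≤ ε := by
    intro g hg
    have e : plusMap Q'.φ (Pn.u g) * Q'.u g
        = w * ((Qn.comp Pn).u g) * star (Sα.α g w) := by
      show ((Q.perturb hX').comp (P.perturb hW)).u g
        = w * (((Q.perturb hX).comp (P.perturb hW)).u g) * star (Sα.α g w)
      rw [comp_perturb_u Q (P.perturb hW) hX', comp_perturb_u Q (P.perturb hW) hX]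
      exact conj_conj_u Sα g w X ((Q.comp (P.perturb hW)).u g)
    rw [e]
    exact hw2 g hg
  -- the B-side composite is a unitary conjugate of `P ∘ Q`
  have hB1 : ApproxUDom Sβ (fun b => b) (fun _ => 1) ((Pn.comp Q').φ) ((Pn.comp Q').u) := by
    have step1 := approx_conj (plusMap_mem_unitary P.φ hX') hB
    have step1' := approx_congr (fun b => (perturb_comp_φ P Q hX' b).symm)
      (fun g => (perturb_comp_u P Q hX' g).symm) step1
    have step2 := approx_conj hW step1'
    exact approx_congr (fun b => (comp_perturb_φ P Q' hW b).symm)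
      (fun g => (comp_perturb_u P Q' hW g).symm) step2
  -- the B-side finite set
  let Fb : Finset B := (((Finset.range (n+1)).image seqB ∪
      (Finset.range (n+1)).image (fun i => Pn.φ (seqA i))) ∪ NG) ∪ {1}
  have hG1 : (1 : B) ∈ Fb := Finset.mem_union_right _ (Finset.mem_singleton_self 1)
  have hGB : ∀ i ≤ n, seqB i ∈ Fb := fun i hi =>
    Finset.mem_union_left _ (Finset.mem_union_left _ (Finset.mem_union_left _
      (Finset.mem_image_of_mem seqB (Finset.mem_range.2 (Nat.lt_succ_of_le hi)))))
  have hGA : ∀ i ≤ n, Pn.φ (seqA i) ∈ Fb := fun i hi =>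
    Finset.mem_union_left _ (Finset.mem_union_left _ (Finset.mem_union_right _
      (Finset.mem_image_of_mem _ (Finset.mem_range.2 (Nat.lt_succ_of_le hi)))))
  have hGN : ∀ x ∈ NG, x ∈ Fb := fun x hx =>
    Finset.mem_union_left _ (Finset.mem_union_right _ hx)
  -- choose the B-side unitary
  obtain ⟨z, hz, hz1, hz2⟩ := hB1 ε hε Fb Kn hKn
  have hW' : z * W ∈ unitary B := mul_mem hz hW
  let P' := P.perturb hW'
  have idP'φ : ∀ y : A, P'.φ y = z * Pn.φ y * star z := fun y =>
    conj_conj z W (P.φ y)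
  have idP'u : ∀ g : G, P'.u g = z * Pn.u g * star (Sβ.α g z) := fun g =>
    conj_conj_u Sβ g z W (P.u g)
  have hzs : ∀ b ∈ Fb, ‖b - P'.φ (Q'.φ b)‖ ≤ ε := by
    intro b hb
    have := hz1 b hb
    rw [idP'φ (Q'.φ b)]
    exact this
  have hzc : ∀ g ∈ Kn, ‖1 - plusMap P'.φ (Q'.u g) * P'.u g‖ ≤ ε := by
    intro g hg
    have e : plusMap P'.φ (Q'.u g) * P'.u g
        = z * ((Pn.comp Q').u g) * star (Sβ.α g z) := by
      show ((P.perturb hW').comp (Q.perturb hX')).u g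
        = z * (((P.perturb hW).comp (Q.perturb hX')).u g) * star (Sβ.α g z)
      rw [comp_perturb_u P (Q.perturb hX') hW', comp_perturb_u P (Q.perturb hX') hW]
      exact conj_conj_u Sβ g z W ((P.comp (Q.perturb hX')).u g)
    rw [e]
    exact hz2 g hg
  -- now assemble the eight conclusions
  refine ⟨z * W, hW', w * X, hX', ?_, ?_, ?_, ?_, ?_, ?_, hzc, hwc⟩
  · -- (1)
    exact fun i hi => hws (seqA i) (hFA i hi)
  · -- (2)
    exact fun i hi => hzs (seqB i) (hGB i hi)
  · -- (3)
    intro i hi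
    have l1 : ‖P'.φ (seqA i) - P'.φ (Q'.φ (Pn.φ (seqA i)))‖ ≤ ε :=
      le_trans (hom_lip P'.φ _ _) (hws (seqA i) (hFA i hi))
    have l2 : ‖P'.φ (Q'.φ (Pn.φ (seqA i))) - Pn.φ (seqA i)‖ ≤ ε := by
      rw [norm_sub_rev]; exact hzs _ (hGA i hi)
    calc ‖P'.φ (seqA i) - Pn.φ (seqA i)‖
        ≤ ‖P'.φ (seqA i) - P'.φ (Q'.φ (Pn.φ (seqA i)))‖
          + ‖P'.φ (Q'.φ (Pn.φ (seqA i))) - Pn.φ (seqA i)‖ := tri _ _ _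
      _ ≤ ε + ε := add_le_add l1 l2
      _ = 2 * ε := by ring
  · -- (4)
    intro i hi
    have l1 : ‖Q'.φ (seqB i) - Q'.φ (Pn.φ (Qn.φ (seqB i)))‖
        ≤ ‖seqB i - Pn.φ (Qn.φ (seqB i))‖ := hom_lip Q'.φ _ _
    have l2 : ‖Q'.φ (Pn.φ (Qn.φ (seqB i))) - Qn.φ (seqB i)‖ ≤ ε := by
      rw [norm_sub_rev]; exact hws _ (hFB i hi)
    calc ‖Q'.φ (seqB i) - Qn.φ (seqB i)‖
        ≤ ‖Q'.φ (seqB i) - Q'.φ (Pn.φ (Qn.φ (seqB i)))‖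
          + ‖Q'.φ (Pn.φ (Qn.φ (seqB i))) - Qn.φ (seqB i)‖ := tri _ _ _
      _ ≤ ‖seqB i - Pn.φ (Qn.φ (seqB i))‖ + ε := add_le_add l1 l2
      _ = ε + ‖seqB i - Pn.φ (Qn.φ (seqB i))‖ := by ring
  · -- (5)
    intro g hg
    have hsu : plusMap P'.φ (Q'.u g) ∈ unitary B :=
      plusMap_mem_unitary P'.φ (Q'.u_mem g)
    have hqu : plusMap Q'.φ (Pn.u g) ∈ unitary A :=
      plusMap_mem_unitary Q'.φ (Pn.u_mem g)
    have l1 : ‖P'.u g - star (plusMap P'.φ (Q'.u g))‖ ≤ ε := by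
      rw [unit_close₁ hsu]; exact hzc g hg
    have l2 : ‖Q'.u g - star (plusMap Q'.φ (Pn.u g))‖ ≤ ε := by
      rw [unit_close₁ hqu]; exact hwc g hg
    have l3 : ‖plusMap P'.φ (Q'.u g) - plusMap P'.φ (plusMap Q'.φ (star (Pn.u g)))‖ ≤ ε := by
      rw [plusMap_star]
      exact le_trans (plusMap_lip P'.φ _ _) l2
    have l4 : ‖plusMap P'.φ (plusMap Q'.φ (star (Pn.u g))) - star (Pn.u g)‖ ≤ 4 * ε := by
      refine plus_plus_close P'.φ Q'.φ hG1 (fun b hb => hzs b hb) ?_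
      obtain ⟨y, hy, hxy⟩ := hNG (star (Pn.u g)) ⟨g, hg, rfl⟩
      exact ⟨y, hGN y hy, hxy⟩
    have l5 : ‖Pn.u g - star (plusMap P'.φ (Q'.u g))‖ ≤ 5 * ε := by
      rw [← norm_sub_star, star_star, norm_sub_rev]
      calc ‖plusMap P'.φ (Q'.u g) - star (Pn.u g)‖
          ≤ ‖plusMap P'.φ (Q'.u g) - plusMap P'.φ (plusMap Q'.φ (star (Pn.u g)))‖
            + ‖plusMap P'.φ (plusMap Q'.φ (star (Pn.u g))) - star (Pn.u g)‖ := tri _ _ _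
        _ ≤ ε + 4 * ε := add_le_add l3 l4
        _ = 5 * ε := by ring
    calc ‖P'.u g - Pn.u g‖
        ≤ ‖P'.u g - star (plusMap P'.φ (Q'.u g))‖
          + ‖star (plusMap P'.φ (Q'.u g)) - Pn.u g‖ := tri _ _ _
      _ ≤ ε + 5 * ε := add_le_add l1 (by rw [norm_sub_rev]; exact l5)
      _ = 6 * ε := by ring
  · -- (6)
    intro g hg
    have hqu : plusMap Q'.φ (Pn.u g) ∈ unitary A :=
      plusMap_mem_unitary Q'.φ (Pn.u_mem g)
    have hpu : plusMap Pn.φ (Qn.u g) ∈ unitary B :=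
      plusMap_mem_unitary Pn.φ (Qn.u_mem g)
    have l2 : ‖Q'.u g - star (plusMap Q'.φ (Pn.u g))‖ ≤ ε := by
      rw [unit_close₁ hqu]; exact hwc g hg
    have l6 : ‖Pn.u g - star (plusMap Pn.φ (Qn.u g))‖
        = ‖1 - plusMap Pn.φ (Qn.u g) * Pn.u g‖ := unit_close₁ hpu
    have l3 : ‖plusMap Q'.φ (Pn.u g) - plusMap Q'.φ (plusMap Pn.φ (star (Qn.u g)))‖
        ≤ ‖1 - plusMap Pn.φ (Qn.u g) * Pn.u g‖ := by
      rw [plusMap_star]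
      exact le_trans (plusMap_lip Q'.φ _ _) (le_of_eq l6)
    have l4 : ‖plusMap Q'.φ (plusMap Pn.φ (star (Qn.u g))) - star (Qn.u g)‖ ≤ 4 * ε := by
      refine plus_plus_close Q'.φ Pn.φ hF1 (fun a ha => hws a ha) ?_
      obtain ⟨y, hy, hxy⟩ := hNF (star (Qn.u g)) ⟨g, hg, rfl⟩
      exact ⟨y, hFN y hy, hxy⟩
    have l5 : ‖Qn.u g - star (plusMap Q'.φ (Pn.u g))‖
        ≤ ‖1 - plusMap Pn.φ (Qn.u g) * Pn.u g‖ + 4 * ε := by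
      rw [← norm_sub_star, star_star, norm_sub_rev]
      calc ‖plusMap Q'.φ (Pn.u g) - star (Qn.u g)‖
          ≤ ‖plusMap Q'.φ (Pn.u g) - plusMap Q'.φ (plusMap Pn.φ (star (Qn.u g)))‖
            + ‖plusMap Q'.φ (plusMap Pn.φ (star (Qn.u g))) - star (Qn.u g)‖ := tri _ _ _
        _ ≤ ‖1 - plusMap Pn.φ (Qn.u g) * Pn.u g‖ + 4 * ε := add_le_add l3 l4
    calc ‖Q'.u g - Qn.u g‖
        ≤ ‖Q'.u g - star (plusMap Q'.φ (Pn.u g))‖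
          + ‖star (plusMap Q'.φ (Pn.u g)) - Qn.u g‖ := tri _ _ _
      _ ≤ ε + (‖1 - plusMap Pn.φ (Qn.u g) * Pn.u g‖ + 4 * ε) :=
          add_le_add l2 (by rw [norm_sub_rev]; exact l5)
      _ = 5 * ε + ‖1 - plusMap Pn.φ (Qn.u g) * Pn.u g‖ := by ring
end TSI

end Helpers4

noncomputable section Helpers5

open Filter Topology

namespace TSI

variable {G : Type*} [Group G] [TopologicalSpace G]
variable {A B : Type*} [CStarAlgebra A] [CStarAlgebra B]

lemma unit_norm_le {u : A} (hu : u ∈ unitary A) : ‖u‖ ≤ 1 := by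
  rcases subsingleton_or_nontrivial A with h | h
  · have : u = 0 := Subsingleton.elim u 0
    simp [this]
  · exact le_of_eq (CStarRing.norm_of_mem_unitary hu)

lemma unit_diff_le {u v : A} (hu : u ∈ unitary A) (hv : v ∈ unitary A) : ‖u - v‖ ≤ 2 := by
  calc ‖u - v‖ ≤ ‖u‖ + ‖v‖ := norm_sub_le _ _
    _ ≤ 1 + 1 := add_le_add (unit_norm_le hu) (unit_norm_le hv)
    _ = 2 := by norm_num

lemma cauchySeq_of_eventually_geometric {f : ℕ → A} {C D : ℝ} {m : ℕ}
    (hC : 0 ≤ C) (hD : 0 ≤ D)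
    (hbd : ∀ n, ‖f (n + 1) - f n‖ ≤ D)
    (h : ∀ n, m ≤ n → ‖f (n + 1) - f n‖ ≤ C * (1/2) ^ n) : CauchySeq f := by
  refine cauchySeq_of_le_geometric (1/2) (max C (D * 2 ^ m)) (by norm_num) fun n => ?_
  rw [dist_eq_norm']
  rcases le_or_gt m n with hn | hn
  · exact le_trans (h n hn) (by
      have : C ≤ max C (D * 2 ^ m) := le_max_left _ _
      have hp : (0:ℝ) ≤ (1/2 : ℝ) ^ n := by positivity
      nlinarith)
  · have h1 : ((1:ℝ)/2) ^ m ≤ (1/2) ^ n :=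
      pow_le_pow_of_le_one (by norm_num) (by norm_num) hn.le
    have h2 : D = (D * 2 ^ m) * (1/2) ^ m := by
      rw [mul_assoc, one_div, inv_pow, mul_inv_cancel₀ (by positivity), mul_one]
    calc ‖f (n + 1) - f n‖ ≤ D := hbd n
      _ = (D * 2 ^ m) * (1/2) ^ m := h2
      _ ≤ (D * 2 ^ m) * (1/2) ^ n := by
          have : (0:ℝ) ≤ D * 2 ^ m := by positivity
          nlinarith
      _ ≤ max C (D * 2 ^ m) * (1/2) ^ n := by
          have : D * 2 ^ m ≤ max C (D * 2 ^ m) := le_max_right _ _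
          have hp : (0:ℝ) ≤ (1/2 : ℝ) ^ n := by positivity
          nlinarith

lemma norm_lim_sub_le {f : ℕ → A} {L : A} {C : ℝ} {m : ℕ}
    (hf : Tendsto f atTop (𝓝 L))
    (h : ∀ n, m ≤ n → ‖f (n + 1) - f n‖ ≤ C * (1/2) ^ n) :
    ∀ n, m ≤ n → ‖L - f n‖ ≤ 2 * C * (1/2) ^ n := by
  intro n hn
  have hg : Tendsto (fun k => f (k + n)) atTop (𝓝 L) := hf.comp (tendsto_add_atTop_nat n)
  have hu : ∀ k, dist (f (k + n)) (f (k + 1 + n)) ≤ (C * (1/2) ^ n) * (1/2) ^ k := by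
    intro k
    rw [dist_eq_norm']
    have := h (k + n) (le_trans hn (Nat.le_add_left n k))
    calc ‖f (k + 1 + n) - f (k + n)‖ = ‖f ((k + n) + 1) - f (k + n)‖ := by ring_nf
      _ ≤ C * (1/2) ^ (k + n) := this
      _ = (C * (1/2) ^ n) * (1/2) ^ k := by rw [pow_add]; ring
  have := dist_le_of_le_geometric_of_tendsto₀ (1/2) (C * (1/2) ^ n) (by norm_num)
    (f := fun k => f (k + n)) hu hg
  rw [dist_eq_norm'] at this
  simp only [Nat.zero_add] at this
  calc ‖L - f n‖ ≤ C * (1/2) ^ n / (1 - 1/2) := this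
    _ = 2 * C * (1/2) ^ n := by ring

lemma cauchySeq_of_dense_lip {f : ℕ → A → B} (hlip : ∀ n x y, ‖f n x - f n y‖ ≤ ‖x - y‖)
    {s : ℕ → A} (hs : DenseRange s) (hc : ∀ i, CauchySeq fun n => f n (s i)) (a : A) :
    CauchySeq fun n => f n a := by
  rw [Metric.cauchySeq_iff]
  intro δ hδ
  obtain ⟨b, ⟨i, rfl⟩, hab⟩ := Metric.mem_closure_iff.mp (hs a) (δ/4) (by linarith)
  obtain ⟨N, hN⟩ := Metric.cauchySeq_iff.mp (hc i) (δ/2) (by linarith)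
  refine ⟨N, fun p hp q hq => ?_⟩
  have l1 : dist (f p a) (f p (s i)) < δ/4 := by
    rw [dist_eq_norm]
    exact lt_of_le_of_lt (hlip p a (s i)) (by rw [← dist_eq_norm]; exact hab)
  have l2 : dist (f q (s i)) (f q a) < δ/4 := by
    rw [dist_eq_norm]
    calc ‖f q (s i) - f q a‖ ≤ ‖s i - a‖ := hlip q _ _
      _ = dist a (s i) := by rw [dist_eq_norm, norm_sub_rev]
      _ < δ/4 := hab
  calc dist (f p a) (f q a)
      ≤ dist (f p a) (f p (s i)) + dist (f p (s i)) (f q (s i)) + dist (f q (s i)) (f q a) :=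
        dist_triangle4 _ _ _ _
    _ < δ/4 + δ/2 + δ/4 := by
        have := hN p hp q hq
        gcongr
    _ = δ := by ring

/-- The pointwise limit of a sequence of ⋆-homomorphisms. -/
def limitHom (φn : ℕ → (A →⋆ₙₐ[ℂ] B)) (L : A → B)
    (hL : ∀ a, Tendsto (fun n => φn n a) atTop (𝓝 (L a))) : A →⋆ₙₐ[ℂ] B where
  toFun := L
  map_smul' c a := by
    refine tendsto_nhds_unique (hL (c • a)) ?_
    have : (fun n => φn n (c • a)) = fun n => c • (φn n a) := by
      funext n; rw [map_smul]
    rw [this]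
    exact (hL a).const_smul c
  map_zero' := by
    refine tendsto_nhds_unique (hL 0) ?_
    have : (fun n => φn n 0) = fun _ => (0 : B) := by funext n; rw [map_zero]
    rw [this]
    exact tendsto_const_nhds
  map_add' a b := by
    refine tendsto_nhds_unique (hL (a + b)) ?_
    have : (fun n => φn n (a + b)) = fun n => φn n a + φn n b := by
      funext n; rw [map_add]
    rw [this]
    exact (hL a).add (hL b)
  map_mul' a b := by
    refine tendsto_nhds_unique (hL (a * b)) ?_
    have : (fun n => φn n (a * b)) = fun n => φn n a * φn n b := by
      funext n; rw [map_mul]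
    rw [this]
    exact (hL a).mul (hL b)
  map_star' a := by
    refine tendsto_nhds_unique (hL (star a)) ?_
    have : (fun n => φn n (star a)) = fun n => star (φn n a) := by
      funext n; rw [map_star]
    rw [this]
    exact (hL a).star

lemma limitHom_apply (φn : ℕ → (A →⋆ₙₐ[ℂ] B)) (L : A → B)
    (hL : ∀ a, Tendsto (fun n => φn n a) atTop (𝓝 (L a))) (a : A) :
    limitHom φn L hL a = L a := rfl

end TSI

end Helpers5

noncomputable section Helpers5b

open Filter Topology

namespace TSI

variable {A B : Type*} [CStarAlgebra A] [CStarAlgebra B]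

lemma equiv_cont (e : A ≃⋆ₐ[ℂ] A) : Continuous e := by
  refine (LipschitzWith.of_dist_le_mul (K := 1) fun x y => ?_).continuous
  have : ‖e x - e y‖ ≤ ‖x - y‖ := by
    rw [← map_sub]; exact NonUnitalStarAlgHom.norm_apply_le e _
  simpa [dist_eq_norm] using this

/-- transfer of pointwise limits along equicontractive maps. -/
lemma tendsto_comp_lip {φn : ℕ → B → A} {f : ℕ → B} {x : B} {y : A}
    (hlip : ∀ n u v, ‖φn n u - φn n v‖ ≤ ‖u - v‖)
    (hx : Tendsto f atTop (𝓝 x))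
    (hL : Tendsto (fun n => φn n x) atTop (𝓝 y)) :
    Tendsto (fun n => φn n (f n)) atTop (𝓝 y) := by
  refine hL.congr_dist ?_
  have hb : ∀ n, dist (φn n x) (φn n (f n)) ≤ dist (f n) x := by
    intro n
    rw [dist_eq_norm, dist_eq_norm]
    calc ‖φn n x - φn n (f n)‖ ≤ ‖x - f n‖ := hlip n _ _
      _ = ‖f n - x‖ := norm_sub_rev _ _
  have h0 : Tendsto (fun n => dist (f n) x) atTop (𝓝 0) :=
    tendsto_iff_dist_tendsto_zero.mp hx
  exact squeeze_zero (fun n => dist_nonneg) hb h0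

end TSI

end Helpers5b

set_option maxHeartbeats 2000000 in
open Filter Topology TSI in
/-- (Two-sided approximate intertwining.) If `(φ,u)` and `(ψ,v)` are cocycle
morphisms between twisted actions on separable unital C*-algebras such that
`(id_A,1) ⪅ᵤ (ψ,v)∘(φ,u)` and `(id_B,1) ⪅ᵤ (φ,u)∘(ψ,v)`, then there exist mutually inverse
cocycle conjugacies `(Φ,U)` and `(Ψ,V)` with `(Φ,U) ⪅ᵤ (φ,u)` and `(Ψ,V) ⪅ᵤ (ψ,v)`. -/
theorem exists_mutuallyInverse_cocycleConjugacies_of_approxUDom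
    {G A B : Type*} [Group G] [TopologicalSpace G] [IsTopologicalGroup G]
    [LocallyCompactSpace G] [SecondCountableTopology G] [T2Space G]
    [CStarAlgebra A] [CStarAlgebra B]
    [TopologicalSpace.SeparableSpace A] [TopologicalSpace.SeparableSpace B]
    (Sα : TwistedAction G A) (Sβ : TwistedAction G B)
    (P : CocycleMorphism Sα Sβ) (Q : CocycleMorphism Sβ Sα)
    (hA : ApproxUDom Sα (fun a => a) (fun _ => 1)
      (fun a => Q.φ (P.φ a)) (fun g => plusMap Q.φ (P.u g) * Q.u g))
    (hB : ApproxUDom Sβ (fun b => b) (fun _ => 1)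
      (fun b => P.φ (Q.φ b)) (fun g => plusMap P.φ (Q.u g) * P.u g)) :
    ∃ (Φ : CocycleMorphism Sα Sβ) (Ψ : CocycleMorphism Sβ Sα),
      Function.Bijective Φ.φ ∧ Function.Bijective Ψ.φ ∧
      (∀ a : A, Ψ.φ (Φ.φ a) = a) ∧ (∀ b : B, Φ.φ (Ψ.φ b) = b) ∧
      (∀ g : G, Ψ.u g = star (Ψ.φ (Φ.u g))) ∧
      ApproxUDom Sβ Φ.φ Φ.u P.φ P.u ∧
      ApproxUDom Sα Ψ.φ Ψ.u Q.φ Q.u := by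
  classical
  have hA' : ApproxUDom Sα (fun a => a) (fun _ => 1) ((Q.comp P).φ) ((Q.comp P).u) := hA
  have hB' : ApproxUDom Sβ (fun b => b) (fun _ => 1) ((P.comp Q).φ) ((P.comp Q).u) := hB
  haveI : Nonempty A := ⟨1⟩
  haveI : Nonempty B := ⟨1⟩
  obtain ⟨seqA, hseqA⟩ := TopologicalSpace.exists_dense_seq A
  obtain ⟨seqB, hseqB⟩ := TopologicalSpace.exists_dense_seq B
  let K : CompactExhaustion G := CompactExhaustion.choice G
  have htend0 : Tendsto (fun n : ℕ => ((1:ℝ)/2) ^ n) atTop (𝓝 0) :=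
    tendsto_pow_atTop_nhds_zero_of_lt_one (by norm_num) (by norm_num)
  -- the inductive construction
  obtain ⟨T, hT⟩ :
      ∃ T : ℕ → {p : B × A // p.1 ∈ unitary B ∧ p.2 ∈ unitary A},
        ∀ n : ℕ,
          (∀ i ≤ n, ‖seqA i - (Q.perturb (T (n+1)).2.2).φ
              ((P.perturb (T n).2.1).φ (seqA i))‖ ≤ (1/2:ℝ)^n) ∧
          (∀ i ≤ n, ‖seqB i - (P.perturb (T (n+1)).2.1).φ
              ((Q.perturb (T (n+1)).2.2).φ (seqB i))‖ ≤ (1/2:ℝ)^n) ∧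
          (∀ i ≤ n, ‖(P.perturb (T (n+1)).2.1).φ (seqA i)
              - (P.perturb (T n).2.1).φ (seqA i)‖ ≤ 2 * (1/2:ℝ)^n) ∧
          (∀ i ≤ n, ‖(Q.perturb (T (n+1)).2.2).φ (seqB i)
              - (Q.perturb (T n).2.2).φ (seqB i)‖
              ≤ (1/2:ℝ)^n + ‖seqB i - (P.perturb (T n).2.1).φ
                  ((Q.perturb (T n).2.2).φ (seqB i))‖) ∧
          (∀ g ∈ K n, ‖(P.perturb (T (n+1)).2.1).u g
              - (P.perturb (T n).2.1).u g‖ ≤ 6 * (1/2:ℝ)^n) ∧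
          (∀ g ∈ K n, ‖(Q.perturb (T (n+1)).2.2).u g - (Q.perturb (T n).2.2).u g‖
              ≤ 5 * (1/2:ℝ)^n + ‖1 - plusMap (P.perturb (T n).2.1).φ
                  ((Q.perturb (T n).2.2).u g) * (P.perturb (T n).2.1).u g‖) ∧
          (∀ g ∈ K n, ‖1 - plusMap (P.perturb (T (n+1)).2.1).φ
              ((Q.perturb (T (n+1)).2.2).u g) * (P.perturb (T (n+1)).2.1).u g‖ ≤ (1/2:ℝ)^n) ∧
          (∀ g ∈ K n, ‖1 - plusMap (Q.perturb (T (n+1)).2.2).φ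
              ((P.perturb (T n).2.1).u g) * (Q.perturb (T (n+1)).2.2).u g‖ ≤ (1/2:ℝ)^n) := by
    have hstep : ∀ (n : ℕ) (s : {p : B × A // p.1 ∈ unitary B ∧ p.2 ∈ unitary A}),
        ∃ s' : {p : B × A // p.1 ∈ unitary B ∧ p.2 ∈ unitary A},
          (∀ i ≤ n, ‖seqA i - (Q.perturb s'.2.2).φ
              ((P.perturb s.2.1).φ (seqA i))‖ ≤ (1/2:ℝ)^n) ∧
          (∀ i ≤ n, ‖seqB i - (P.perturb s'.2.1).φ
              ((Q.perturb s'.2.2).φ (seqB i))‖ ≤ (1/2:ℝ)^n) ∧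
          (∀ i ≤ n, ‖(P.perturb s'.2.1).φ (seqA i)
              - (P.perturb s.2.1).φ (seqA i)‖ ≤ 2 * (1/2:ℝ)^n) ∧
          (∀ i ≤ n, ‖(Q.perturb s'.2.2).φ (seqB i) - (Q.perturb s.2.2).φ (seqB i)‖
              ≤ (1/2:ℝ)^n + ‖seqB i - (P.perturb s.2.1).φ
                  ((Q.perturb s.2.2).φ (seqB i))‖) ∧
          (∀ g ∈ K n, ‖(P.perturb s'.2.1).u g - (P.perturb s.2.1).u g‖ ≤ 6 * (1/2:ℝ)^n) ∧
          (∀ g ∈ K n, ‖(Q.perturb s'.2.2).u g - (Q.perturb s.2.2).u g‖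
              ≤ 5 * (1/2:ℝ)^n + ‖1 - plusMap (P.perturb s.2.1).φ
                  ((Q.perturb s.2.2).u g) * (P.perturb s.2.1).u g‖) ∧
          (∀ g ∈ K n, ‖1 - plusMap (P.perturb s'.2.1).φ
              ((Q.perturb s'.2.2).u g) * (P.perturb s'.2.1).u g‖ ≤ (1/2:ℝ)^n) ∧
          (∀ g ∈ K n, ‖1 - plusMap (Q.perturb s'.2.2).φ
              ((P.perturb s.2.1).u g) * (Q.perturb s'.2.2).u g‖ ≤ (1/2:ℝ)^n) := by
      intro n s
      obtain ⟨W', hW', X', hX', h1, h2, h3, h4, h5, h6, h7, h8⟩ :=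
        TSI.step_ex P Q hA' hB' seqA seqB (K n) (K.isCompact n) n
          (ε := (1/2:ℝ)^n) (by positivity) s.2.1 s.2.2
      exact ⟨⟨(W', X'), hW', hX'⟩, h1, h2, h3, h4, h5, h6, h7, h8⟩
    choose f hf using hstep
    have init : {p : B × A // p.1 ∈ unitary B ∧ p.2 ∈ unitary A} :=
      ⟨(1, 1), one_mem _, one_mem _⟩
    have e : ∀ n : ℕ, (Nat.rec (motive := fun _ =>
          {p : B × A // p.1 ∈ unitary B ∧ p.2 ∈ unitary A}) init f (n+1))
        = f n (Nat.rec (motive := fun _ =>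
          {p : B × A // p.1 ∈ unitary B ∧ p.2 ∈ unitary A}) init f n) := fun n => rfl
    refine ⟨fun n => Nat.rec (motive := fun _ =>
      {p : B × A // p.1 ∈ unitary B ∧ p.2 ∈ unitary A}) init f n, fun n => ?_⟩
    beta_reduce
    rw [e n]
    exact hf n _
  have S1 := fun n => (hT n).1
  have S2 := fun n => (hT n).2.1
  have S3 := fun n => (hT n).2.2.1
  have S4 := fun n => (hT n).2.2.2.1
  have S5 := fun n => (hT n).2.2.2.2.1
  have S6 := fun n => (hT n).2.2.2.2.2.1
  have S7 := fun n => (hT n).2.2.2.2.2.2.1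
  have S8 := fun n => (hT n).2.2.2.2.2.2.2
  clear hT
  -- convergence of the maps
  have cauchyPA : ∀ a : A, CauchySeq fun n => (P.perturb (T n).2.1).φ a := by
    refine cauchySeq_of_dense_lip (fun n x y => hom_lip _ x y) hseqA (fun i => ?_)
    refine cauchySeq_of_eventually_geometric (C := 2) (D := 2 * ‖seqA i‖) (m := i)
      (by norm_num) (by positivity) (fun n => ?_) (fun n hn => S3 n i hn)
    calc ‖(P.perturb (T (n+1)).2.1).φ (seqA i) - (P.perturb (T n).2.1).φ (seqA i)‖
        ≤ ‖(P.perturb (T (n+1)).2.1).φ (seqA i)‖ + ‖(P.perturb (T n).2.1).φ (seqA i)‖ :=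
          norm_sub_le _ _
      _ ≤ ‖seqA i‖ + ‖seqA i‖ :=
          add_le_add (NonUnitalStarAlgHom.norm_apply_le _ _)
            (NonUnitalStarAlgHom.norm_apply_le _ _)
      _ = 2 * ‖seqA i‖ := by ring
  have incQ : ∀ i n, i + 1 ≤ n →
      ‖(Q.perturb (T (n+1)).2.2).φ (seqB i) - (Q.perturb (T n).2.2).φ (seqB i)‖
        ≤ 3 * (1/2:ℝ)^n := by
    intro i n hin
    obtain ⟨m, rfl⟩ : ∃ m, n = m + 1 := ⟨n - 1, by omega⟩
    have h4 := S4 (m+1) i (by omega)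
    have h2 := S2 m i (by omega)
    calc ‖(Q.perturb (T (m+1+1)).2.2).φ (seqB i) - (Q.perturb (T (m+1)).2.2).φ (seqB i)‖
        ≤ (1/2:ℝ)^(m+1) + ‖seqB i - (P.perturb (T (m+1)).2.1).φ
            ((Q.perturb (T (m+1)).2.2).φ (seqB i))‖ := h4
      _ ≤ (1/2:ℝ)^(m+1) + (1/2:ℝ)^m := by linarith
      _ = 3 * (1/2:ℝ)^(m+1) := by rw [pow_succ]; ring
  have cauchyQB : ∀ b : B, CauchySeq fun n => (Q.perturb (T n).2.2).φ b := by
    refine cauchySeq_of_dense_lip (fun n x y => hom_lip _ x y) hseqB (fun i => ?_)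
    refine cauchySeq_of_eventually_geometric (C := 3) (D := 2 * ‖seqB i‖) (m := i + 1)
      (by norm_num) (by positivity) (fun n => ?_) (fun n hn => incQ i n hn)
    calc ‖(Q.perturb (T (n+1)).2.2).φ (seqB i) - (Q.perturb (T n).2.2).φ (seqB i)‖
        ≤ ‖(Q.perturb (T (n+1)).2.2).φ (seqB i)‖ + ‖(Q.perturb (T n).2.2).φ (seqB i)‖ :=
          norm_sub_le _ _
      _ ≤ ‖seqB i‖ + ‖seqB i‖ :=
          add_le_add (NonUnitalStarAlgHom.norm_apply_le _ _)
            (NonUnitalStarAlgHom.norm_apply_le _ _)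
      _ = 2 * ‖seqB i‖ := by ring
  choose ΦL hΦL using fun a => cauchySeq_tendsto_of_complete (cauchyPA a)
  choose ΨL hΨL using fun b => cauchySeq_tendsto_of_complete (cauchyQB b)
  -- convergence of the cocycles
  have cauchyU : ∀ g : G, CauchySeq fun n => (P.perturb (T n).2.1).u g := by
    intro g
    obtain ⟨m, hgm⟩ := K.exists_mem g
    exact cauchySeq_of_eventually_geometric (C := 6) (D := 2) (m := m) (by norm_num)
      (by norm_num)
      (fun n => unit_diff_le ((P.perturb (T (n+1)).2.1).u_mem g) ((P.perturb (T n).2.1).u_mem g))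
      (fun n hn => S5 n g (K.subset hn hgm))
  have incV : ∀ m (g : G), g ∈ K m → ∀ n, m + 1 ≤ n →
      ‖(Q.perturb (T (n+1)).2.2).u g - (Q.perturb (T n).2.2).u g‖ ≤ 7 * (1/2:ℝ)^n := by
    intro m g hg n hn
    obtain ⟨k, rfl⟩ : ∃ k, n = k + 1 := ⟨n - 1, by omega⟩
    have h6 := S6 (k+1) g (K.subset (by omega) hg)
    have h7 := S7 k g (K.subset (by omega : m ≤ k) hg)
    calc ‖(Q.perturb (T (k+1+1)).2.2).u g - (Q.perturb (T (k+1)).2.2).u g‖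
        ≤ 5 * (1/2:ℝ)^(k+1) + ‖1 - plusMap (P.perturb (T (k+1)).2.1).φ
            ((Q.perturb (T (k+1)).2.2).u g) * (P.perturb (T (k+1)).2.1).u g‖ := h6
      _ ≤ 5 * (1/2:ℝ)^(k+1) + (1/2:ℝ)^k := by linarith
      _ = 7 * (1/2:ℝ)^(k+1) := by rw [pow_succ]; ring
  have cauchyV : ∀ g : G, CauchySeq fun n => (Q.perturb (T n).2.2).u g := by
    intro g
    obtain ⟨m, hgm⟩ := K.exists_mem g
    exact cauchySeq_of_eventually_geometric (C := 7) (D := 2) (m := m + 1) (by norm_num)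
      (by norm_num)
      (fun n => unit_diff_le ((Q.perturb (T (n+1)).2.2).u_mem g) ((Q.perturb (T n).2.2).u_mem g))
      (fun n hn => incV m g hgm n hn)
  choose UL hUL using fun g => cauchySeq_tendsto_of_complete (cauchyU g)
  choose VL hVL using fun g => cauchySeq_tendsto_of_complete (cauchyV g)
  have hUtail : ∀ m n, m ≤ n → ∀ g ∈ K m,
      ‖UL g - (P.perturb (T n).2.1).u g‖ ≤ 12 * (1/2:ℝ)^n := by
    intro m n hmn g hg
    have := norm_lim_sub_le (C := 6) (m := n) (hUL g)
      (fun k hk => S5 k g (K.subset (le_trans hmn hk) hg)) n le_rfl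
    calc ‖UL g - (P.perturb (T n).2.1).u g‖ ≤ 2 * 6 * (1/2:ℝ)^n := this
      _ = 12 * (1/2:ℝ)^n := by ring
  have hVtail : ∀ m n, m + 1 ≤ n → ∀ g ∈ K m,
      ‖VL g - (Q.perturb (T n).2.2).u g‖ ≤ 14 * (1/2:ℝ)^n := by
    intro m n hmn g hg
    have := norm_lim_sub_le (C := 7) (m := n) (hVL g)
      (fun k hk => incV m g hg k (le_trans hmn hk)) n le_rfl
    calc ‖VL g - (Q.perturb (T n).2.2).u g‖ ≤ 2 * 7 * (1/2:ℝ)^n := this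
      _ = 14 * (1/2:ℝ)^n := by ring
  -- the limit homomorphisms
  let Φhom : A →⋆ₙₐ[ℂ] B := TSI.limitHom (fun n => (P.perturb (T n).2.1).φ) ΦL hΦL
  let Ψhom : B →⋆ₙₐ[ℂ] A := TSI.limitHom (fun n => (Q.perturb (T n).2.2).φ) ΨL hΨL
  -- composite limits
  have hQP : ∀ a : A, Tendsto
      (fun n => (Q.perturb (T (n+1)).2.2).φ ((P.perturb (T n).2.1).φ a)) atTop
      (𝓝 (ΨL (ΦL a))) := fun a =>
    tendsto_comp_lip (fun n u v => hom_lip _ u v) (hΦL a)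
      ((hΨL (ΦL a)).comp (tendsto_add_atTop_nat 1))
  have hPQ : ∀ b : B, Tendsto
      (fun n => (P.perturb (T (n+1)).2.1).φ ((Q.perturb (T (n+1)).2.2).φ b)) atTop
      (𝓝 (ΦL (ΨL b))) := fun b =>
    tendsto_comp_lip (fun n u v => hom_lip _ u v)
      ((hΨL b).comp (tendsto_add_atTop_nat 1))
      ((hΦL (ΨL b)).comp (tendsto_add_atTop_nat 1))
  -- the two inverse identities
  have idA : ∀ a : A, ΨL (ΦL a) = a := by
    have key : ∀ i : ℕ, ΨL (ΦL (seqA i)) = seqA i := by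
      intro i
      have lim1 : Tendsto (fun n => ‖seqA i - (Q.perturb (T (n+1)).2.2).φ
          ((P.perturb (T n).2.1).φ (seqA i))‖) atTop
          (𝓝 ‖seqA i - ΨL (ΦL (seqA i))‖) := (tendsto_const_nhds.sub (hQP (seqA i))).norm
      have hle : ‖seqA i - ΨL (ΦL (seqA i))‖ ≤ 0 :=
        le_of_tendsto_of_tendsto lim1 htend0 (eventually_atTop.2 ⟨i, fun n hn => S1 n i hn⟩)
      exact (sub_eq_zero.mp (norm_le_zero_iff.mp hle)).symm
    have heq : (fun a => ΨL (ΦL a)) = fun a => a := by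
      refine Continuous.ext_on hseqA ((hom_cont Ψhom).comp (hom_cont Φhom)) continuous_id ?_
      rintro x ⟨i, rfl⟩
      exact key i
    exact fun a => congrFun heq a
  have idB : ∀ b : B, ΦL (ΨL b) = b := by
    have key : ∀ i : ℕ, ΦL (ΨL (seqB i)) = seqB i := by
      intro i
      have lim1 : Tendsto (fun n => ‖seqB i - (P.perturb (T (n+1)).2.1).φ
          ((Q.perturb (T (n+1)).2.2).φ (seqB i))‖) atTop
          (𝓝 ‖seqB i - ΦL (ΨL (seqB i))‖) := (tendsto_const_nhds.sub (hPQ (seqB i))).norm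
      have hle : ‖seqB i - ΦL (ΨL (seqB i))‖ ≤ 0 :=
        le_of_tendsto_of_tendsto lim1 htend0 (eventually_atTop.2 ⟨i, fun n hn => S2 n i hn⟩)
      exact (sub_eq_zero.mp (norm_le_zero_iff.mp hle)).symm
    have heq : (fun b => ΦL (ΨL b)) = fun b => b := by
      refine Continuous.ext_on hseqB ((hom_cont Φhom).comp (hom_cont Ψhom)) continuous_id ?_
      rintro x ⟨i, rfl⟩
      exact key i
    exact fun b => congrFun heq b
  -- unitality of the limits
  have hΨ1 : ΨL 1 = 1 := by
    calc ΨL 1 = ΨL 1 * 1 := (mul_one _).symm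
      _ = ΨL 1 * ΨL (ΦL 1) := by rw [idA 1]
      _ = ΨL (1 * ΦL 1) := (map_mul Ψhom 1 (ΦL 1)).symm
      _ = ΨL (ΦL 1) := by rw [one_mul]
      _ = 1 := idA 1
  have hΦ1 : ΦL 1 = 1 := by
    calc ΦL 1 = ΦL 1 * 1 := (mul_one _).symm
      _ = ΦL 1 * ΦL (ΨL 1) := by rw [idB 1]
      _ = ΦL (1 * ΨL 1) := (map_mul Φhom 1 (ΨL 1)).symm
      _ = ΦL (ΨL 1) := by rw [one_mul]
      _ = 1 := idB 1
  -- limits of unitaries are unitary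
  have hULmem : ∀ g : G, UL g ∈ unitary B := by
    intro g
    constructor
    · refine tendsto_nhds_unique (((hUL g).star).mul (hUL g)) ?_
      have e : (fun n => star ((P.perturb (T n).2.1).u g) * (P.perturb (T n).2.1).u g)
          = fun _ => (1 : B) :=
        funext fun n => Unitary.star_mul_self_of_mem ((P.perturb (T n).2.1).u_mem g)
      rw [e]; exact tendsto_const_nhds
    · refine tendsto_nhds_unique ((hUL g).mul ((hUL g).star)) ?_
      have e : (fun n => (P.perturb (T n).2.1).u g * star ((P.perturb (T n).2.1).u g))
          = fun _ => (1 : B) :=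
        funext fun n => Unitary.mul_star_self_of_mem ((P.perturb (T n).2.1).u_mem g)
      rw [e]; exact tendsto_const_nhds
  have hVLmem : ∀ g : G, VL g ∈ unitary A := by
    intro g
    constructor
    · refine tendsto_nhds_unique (((hVL g).star).mul (hVL g)) ?_
      have e : (fun n => star ((Q.perturb (T n).2.2).u g) * (Q.perturb (T n).2.2).u g)
          = fun _ => (1 : A) :=
        funext fun n => Unitary.star_mul_self_of_mem ((Q.perturb (T n).2.2).u_mem g)
      rw [e]; exact tendsto_const_nhds
    · refine tendsto_nhds_unique ((hVL g).mul ((hVL g).star)) ?_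
      have e : (fun n => (Q.perturb (T n).2.2).u g * star ((Q.perturb (T n).2.2).u g))
          = fun _ => (1 : A) :=
        funext fun n => Unitary.mul_star_self_of_mem ((Q.perturb (T n).2.2).u_mem g)
      rw [e]; exact tendsto_const_nhds
  -- continuity of the limit cocycles
  have hUcont : Continuous UL := by
    rw [continuous_iff_continuousAt]
    intro g
    obtain ⟨m, hgm⟩ := K.exists_mem g
    have huni : TendstoUniformlyOn (fun n g => (P.perturb (T n).2.1).u g) UL atTop
        (K (m+1)) := by
      rw [Metric.tendstoUniformlyOn_iff]
      intro δ hδ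
      have h12 : Tendsto (fun n : ℕ => (12:ℝ) * (1/2)^n) atTop (𝓝 0) := by
        simpa using htend0.const_mul (12:ℝ)
      filter_upwards [h12.eventually (gt_mem_nhds hδ), eventually_ge_atTop (m+1)]
        with n h1 h2 g' hg'
      rw [dist_eq_norm]
      exact lt_of_le_of_lt (hUtail (m+1) n h2 g' hg') h1
    have hcOn : ContinuousOn UL (K (m+1)) :=
      huni.continuousOn (Eventually.of_forall fun n => ((P.perturb (T n).2.1).u_cont).continuousOn).frequently
    exact hcOn.continuousAt (mem_interior_iff_mem_nhds.mp (K.subset_interior_succ m hgm))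
  have hVcont : Continuous VL := by
    rw [continuous_iff_continuousAt]
    intro g
    obtain ⟨m, hgm⟩ := K.exists_mem g
    have huni : TendstoUniformlyOn (fun n g => (Q.perturb (T n).2.2).u g) VL atTop
        (K (m+1)) := by
      rw [Metric.tendstoUniformlyOn_iff]
      intro δ hδ
      have h14 : Tendsto (fun n : ℕ => (14:ℝ) * (1/2)^n) atTop (𝓝 0) := by
        simpa using htend0.const_mul (14:ℝ)
      filter_upwards [h14.eventually (gt_mem_nhds hδ), eventually_ge_atTop (m+2)]
        with n h1 h2 g' hg'
      rw [dist_eq_norm]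
      exact lt_of_le_of_lt (hVtail (m+1) n h2 g' hg') h1
    have hcOn : ContinuousOn VL (K (m+1)) :=
      huni.continuousOn (Eventually.of_forall fun n => ((Q.perturb (T n).2.2).u_cont).continuousOn).frequently
    exact hcOn.continuousAt (mem_interior_iff_mem_nhds.mp (K.subset_interior_succ m hgm))
  -- equivariance and cocycle identity for the limits
  have hequivP : ∀ (g : G) (a : A),
      UL g * Sβ.α g (ΦL a) * star (UL g) = ΦL (Sα.α g a) := by
    intro g a
    have t1 : Tendsto (fun n => (P.perturb (T n).2.1).u g *
        Sβ.α g ((P.perturb (T n).2.1).φ a) * star ((P.perturb (T n).2.1).u g)) atTop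
        (𝓝 (UL g * Sβ.α g (ΦL a) * star (UL g))) :=
      ((hUL g).mul (((equiv_cont (Sβ.α g)).tendsto _).comp (hΦL a))).mul ((hUL g).star)
    have e : (fun n => (P.perturb (T n).2.1).u g *
        Sβ.α g ((P.perturb (T n).2.1).φ a) * star ((P.perturb (T n).2.1).u g))
        = fun n => (P.perturb (T n).2.1).φ (Sα.α g a) :=
      funext fun n => (P.perturb (T n).2.1).equivariance g a
    exact tendsto_nhds_unique (e ▸ t1) (hΦL (Sα.α g a))
  have hequivQ : ∀ (g : G) (b : B),
      VL g * Sα.α g (ΨL b) * star (VL g) = ΨL (Sβ.α g b) := by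
    intro g b
    have t1 : Tendsto (fun n => (Q.perturb (T n).2.2).u g *
        Sα.α g ((Q.perturb (T n).2.2).φ b) * star ((Q.perturb (T n).2.2).u g)) atTop
        (𝓝 (VL g * Sα.α g (ΨL b) * star (VL g))) :=
      ((hVL g).mul (((equiv_cont (Sα.α g)).tendsto _).comp (hΨL b))).mul ((hVL g).star)
    have e : (fun n => (Q.perturb (T n).2.2).u g *
        Sα.α g ((Q.perturb (T n).2.2).φ b) * star ((Q.perturb (T n).2.2).u g))
        = fun n => (Q.perturb (T n).2.2).φ (Sβ.α g b) :=
      funext fun n => (Q.perturb (T n).2.2).equivariance g b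
    exact tendsto_nhds_unique (e ▸ t1) (hΨL (Sβ.α g b))
  have hcocP : ∀ g h : G, plusMap Φhom (Sα.u g h)
      = UL g * Sβ.α g (UL h) * Sβ.u g h * star (UL (g * h)) := by
    intro g h
    have t1 : Tendsto (fun n => plusMap (P.perturb (T n).2.1).φ (Sα.u g h)) atTop
        (𝓝 (plusMap Φhom (Sα.u g h))) :=
      ((hΦL (Sα.u g h)).add tendsto_const_nhds).sub (hΦL 1)
    have e : (fun n => plusMap (P.perturb (T n).2.1).φ (Sα.u g h))
        = fun n => (P.perturb (T n).2.1).u g * Sβ.α g ((P.perturb (T n).2.1).u h) *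
            Sβ.u g h * star ((P.perturb (T n).2.1).u (g * h)) :=
      funext fun n => (P.perturb (T n).2.1).cocycle g h
    have t2 : Tendsto (fun n => (P.perturb (T n).2.1).u g *
        Sβ.α g ((P.perturb (T n).2.1).u h) * Sβ.u g h *
        star ((P.perturb (T n).2.1).u (g * h))) atTop
        (𝓝 (UL g * Sβ.α g (UL h) * Sβ.u g h * star (UL (g * h)))) :=
      (((hUL g).mul (((equiv_cont (Sβ.α g)).tendsto _).comp (hUL h))).mul
        tendsto_const_nhds).mul ((hUL (g * h)).star)
    exact tendsto_nhds_unique (e ▸ t1) t2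
  have hcocQ : ∀ g h : G, plusMap Ψhom (Sβ.u g h)
      = VL g * Sα.α g (VL h) * Sα.u g h * star (VL (g * h)) := by
    intro g h
    have t1 : Tendsto (fun n => plusMap (Q.perturb (T n).2.2).φ (Sβ.u g h)) atTop
        (𝓝 (plusMap Ψhom (Sβ.u g h))) :=
      ((hΨL (Sβ.u g h)).add tendsto_const_nhds).sub (hΨL 1)
    have e : (fun n => plusMap (Q.perturb (T n).2.2).φ (Sβ.u g h))
        = fun n => (Q.perturb (T n).2.2).u g * Sα.α g ((Q.perturb (T n).2.2).u h) *
            Sα.u g h * star ((Q.perturb (T n).2.2).u (g * h)) :=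
      funext fun n => (Q.perturb (T n).2.2).cocycle g h
    have t2 : Tendsto (fun n => (Q.perturb (T n).2.2).u g *
        Sα.α g ((Q.perturb (T n).2.2).u h) * Sα.u g h *
        star ((Q.perturb (T n).2.2).u (g * h))) atTop
        (𝓝 (VL g * Sα.α g (VL h) * Sα.u g h * star (VL (g * h)))) :=
      (((hVL g).mul (((equiv_cont (Sα.α g)).tendsto _).comp (hVL h))).mul
        tendsto_const_nhds).mul ((hVL (g * h)).star)
    exact tendsto_nhds_unique (e ▸ t1) t2
  -- the limit of the composed cocycle is trivial
  have hplus : ∀ g : G, ΨL (UL g) * VL g = 1 := by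
    intro g
    obtain ⟨m, hgm⟩ := K.exists_mem g
    have l1 : Tendsto (fun n => (Q.perturb (T (n+1)).2.2).φ ((P.perturb (T n).2.1).u g))
        atTop (𝓝 (ΨL (UL g))) :=
      tendsto_comp_lip (fun n u v => hom_lip _ u v) (hUL g)
        ((hΨL (UL g)).comp (tendsto_add_atTop_nat 1))
    have l2 : Tendsto (fun n => (Q.perturb (T (n+1)).2.2).φ 1) atTop (𝓝 (ΨL 1)) :=
      (hΨL 1).comp (tendsto_add_atTop_nat 1)
    have l3 : Tendsto (fun n => (Q.perturb (T (n+1)).2.2).u g) atTop (𝓝 (VL g)) :=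
      (hVL g).comp (tendsto_add_atTop_nat 1)
    have lc : Tendsto (fun n => plusMap (Q.perturb (T (n+1)).2.2).φ
        ((P.perturb (T n).2.1).u g) * (Q.perturb (T (n+1)).2.2).u g) atTop
        (𝓝 ((ΨL (UL g) + 1 - ΨL 1) * VL g)) :=
      ((l1.add tendsto_const_nhds).sub l2).mul l3
    have lim1 : Tendsto (fun n => ‖1 - plusMap (Q.perturb (T (n+1)).2.2).φ
        ((P.perturb (T n).2.1).u g) * (Q.perturb (T (n+1)).2.2).u g‖) atTop
        (𝓝 ‖1 - (ΨL (UL g) + 1 - ΨL 1) * VL g‖) := (tendsto_const_nhds.sub lc).norm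
    have hle : ‖1 - (ΨL (UL g) + 1 - ΨL 1) * VL g‖ ≤ 0 :=
      le_of_tendsto_of_tendsto lim1 htend0
        (eventually_atTop.2 ⟨m, fun n hn => S8 n g (K.subset hn hgm)⟩)
    have heq := (sub_eq_zero.mp (norm_le_zero_iff.mp hle)).symm
    rw [hΨ1, add_sub_cancel_right] at heq
    exact heq
  have hVstar : ∀ g : G, VL g = star (ΨL (UL g)) := by
    intro g
    have hq : ΨL (UL g) ∈ unitary A := by
      have h1 : star (Ψhom (UL g)) * Ψhom (UL g) = 1 := by
        rw [← map_star Ψhom, ← map_mul Ψhom, Unitary.star_mul_self_of_mem (hULmem g)]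
        exact hΨ1
      have h2 : Ψhom (UL g) * star (Ψhom (UL g)) = 1 := by
        rw [← map_star Ψhom, ← map_mul Ψhom, Unitary.mul_star_self_of_mem (hULmem g)]
        exact hΨ1
      exact ⟨h1, h2⟩
    calc VL g = star (ΨL (UL g)) * (ΨL (UL g) * VL g) := (unit_cancel₁ hq _).symm
      _ = star (ΨL (UL g)) := by rw [hplus g, mul_one]
  -- assemble the two cocycle morphisms
  let Φm : CocycleMorphism Sα Sβ :=
    { φ := Φhom, u := UL, u_mem := hULmem, u_cont := hUcont,
      equivariance := hequivP, cocycle := hcocP }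
  let Ψm : CocycleMorphism Sβ Sα :=
    { φ := Ψhom, u := VL, u_mem := hVLmem, u_cont := hVcont,
      equivariance := hequivQ, cocycle := hcocQ }
  -- the approximation properties
  have approxP : ApproxUDom Sβ ΦL UL P.φ P.u := by
    intro ε hε F Kc hKc
    obtain ⟨m, hm⟩ := K.exists_superset_of_isCompact hKc
    have hev1 : ∀ a ∈ F, ∀ᶠ n in atTop, ‖ΦL a - (P.perturb (T n).2.1).φ a‖ ≤ ε := by
      intro a _
      have hdist : Tendsto (fun n => ‖ΦL a - (P.perturb (T n).2.1).φ a‖) atTop (𝓝 0) := by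
        have := (tendsto_const_nhds (x := ΦL a) (f := atTop)).sub (hΦL a)
        rw [sub_self] at this
        simpa using this.norm
      exact (hdist.eventually (gt_mem_nhds hε)).mono fun n h => h.le
    have hev : ∀ᶠ n in atTop, ∀ a ∈ F, ‖ΦL a - (P.perturb (T n).2.1).φ a‖ ≤ ε :=
      (Filter.eventually_all_finset F).mpr hev1
    have h12 : Tendsto (fun n : ℕ => (12:ℝ) * (1/2)^n) atTop (𝓝 0) := by
      simpa using htend0.const_mul (12:ℝ)
    have hev2 : ∀ᶠ n in atTop, (12:ℝ) * (1/2)^n ≤ ε :=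
      (h12.eventually (gt_mem_nhds hε)).mono fun n h => h.le
    obtain ⟨n, h1, h2, h3⟩ := (hev.and (hev2.and (eventually_ge_atTop m))).exists
    refine ⟨(T n).1.1, (T n).2.1, fun a ha => h1 a ha, fun g hg => ?_⟩
    exact le_trans (hUtail m n h3 g (hm hg)) h2
  have approxQ : ApproxUDom Sα ΨL VL Q.φ Q.u := by
    intro ε hε F Kc hKc
    obtain ⟨m, hm⟩ := K.exists_superset_of_isCompact hKc
    have hev1 : ∀ b ∈ F, ∀ᶠ n in atTop, ‖ΨL b - (Q.perturb (T n).2.2).φ b‖ ≤ ε := by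
      intro b _
      have hdist : Tendsto (fun n => ‖ΨL b - (Q.perturb (T n).2.2).φ b‖) atTop (𝓝 0) := by
        have := (tendsto_const_nhds (x := ΨL b) (f := atTop)).sub (hΨL b)
        rw [sub_self] at this
        simpa using this.norm
      exact (hdist.eventually (gt_mem_nhds hε)).mono fun n h => h.le
    have hev : ∀ᶠ n in atTop, ∀ b ∈ F, ‖ΨL b - (Q.perturb (T n).2.2).φ b‖ ≤ ε :=
      (Filter.eventually_all_finset F).mpr hev1
    have h14 : Tendsto (fun n : ℕ => (14:ℝ) * (1/2)^n) atTop (𝓝 0) := by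
      simpa using htend0.const_mul (14:ℝ)
    have hev2 : ∀ᶠ n in atTop, (14:ℝ) * (1/2)^n ≤ ε :=
      (h14.eventually (gt_mem_nhds hε)).mono fun n h => h.le
    obtain ⟨n, h1, h2, h3⟩ := (hev.and (hev2.and (eventually_ge_atTop (m+1)))).exists
    refine ⟨(T n).1.2, (T n).2.2, fun b hb => h1 b hb, fun g hg => ?_⟩
    exact le_trans (hVtail m n h3 g (hm hg)) h2
  -- conclusion
  refine ⟨Φm, Ψm, ?_, ?_, idA, idB, hVstar, approxP, approxQ⟩
  · exact Function.bijective_iff_has_inverse.mpr ⟨ΨL, idA, idB⟩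
  · exact Function.bijective_iff_has_inverse.mpr ⟨ΦL, idB, idA⟩
end

section
/- Let G be a second-countable locally compact Hausdorff group and let (α,𝔲): G ↷ A, (β,𝔳): G ↷ B, (γ,𝔴): G ↷ C be twisted actions on separable unital C*-algebras. Let (φ,u): (A,α,𝔲) → (B,β,𝔳) and (ψ,v): (B,β,𝔳) → (C,γ,𝔴) be cocycle morphisms. If (φ,u) is asymptotically unitarily equivalent to a cocycle conjugacy (A,α,𝔲) → (B,β,𝔳) and (ψ,v) is asymptotically unitarily equivalent to a cocycle conjugacy (B,β,𝔳) → (C,γ,𝔴), then the composition (ψ,v)∘(φ,u) is asymptotically unitarily equivalent to a cocycle conjugacy (A,α,𝔲) → (C,γ,𝔴). -/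
section Aux

open Filter

variable {B : Type*} {C : Type*} [CStarAlgebra B] [CStarAlgebra C]

lemma aux_map_one_of_bijective (φ : B →⋆ₙₐ[ℂ] C) (h : Function.Bijective φ) : φ 1 = 1 := by
  obtain ⟨a, ha⟩ := h.2 1
  have h1 : φ 1 * φ a = φ a := by rw [← map_mul, one_mul]
  rwa [ha, mul_one] at h1

lemma aux_unitary_map (φ : B →⋆ₙₐ[ℂ] C) (h1 : φ 1 = 1) {u : B} (hu : u ∈ unitary B) :
    φ u ∈ unitary C := by
  rw [Unitary.mem_iff] at hu ⊢
  refine ⟨?_, ?_⟩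
  · rw [← map_star, ← map_mul, hu.1, h1]
  · rw [← map_star, ← map_mul, hu.2, h1]

lemma aux_unitary_map_equiv (e : C ≃⋆ₐ[ℂ] C) {u : C} (hu : u ∈ unitary C) :
    e u ∈ unitary C := by
  rw [Unitary.mem_iff] at hu ⊢
  refine ⟨?_, ?_⟩
  · rw [← map_star, ← map_mul, hu.1, map_one]
  · rw [← map_star, ← map_mul, hu.2, map_one]

lemma aux_unit_cancel {u t : C} (hu : u ∈ unitary C) : star u * (u * t) = t := by
  rw [← mul_assoc, (Unitary.mem_iff.mp hu).1, one_mul]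

lemma aux_eventually_uniform (Ψ Q : B →⋆ₙₐ[ℂ] C) (x : ℝ → C) (hx : ∀ t, x t ∈ unitary C)
    (hpt : ∀ b : B, Tendsto (fun t => ‖Ψ b - x t * Q b * star (x t)‖) atTop (nhds 0))
    {S : Set B} (hS : IsCompact S) {ε : ℝ} (hε : 0 < ε) :
    ∀ᶠ t in atTop, ∀ b ∈ S, ‖Ψ b - x t * Q b * star (x t)‖ ≤ ε := by
  obtain ⟨T, hTS, hTfin, hcov⟩ := hS.finite_cover_balls (show (0:ℝ) < ε/4 by linarith)
  have hev : ∀ᶠ t in atTop, ∀ c ∈ T, ‖Ψ c - x t * Q c * star (x t)‖ ≤ ε/2 := by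
    rw [Filter.eventually_all_finite hTfin]
    intro c _
    exact ((hpt c).eventually (gt_mem_nhds (by linarith : (0:ℝ) < ε/2))).mono fun t ht => ht.le
  refine hev.mono fun t ht b hb => ?_
  obtain ⟨c, hcT, hbc⟩ := Set.mem_iUnion₂.mp (hcov hb)
  have hd : ‖b - c‖ < ε/4 := by rwa [Metric.mem_ball, dist_eq_norm] at hbc
  have hsplit : Ψ b - x t * Q b * star (x t)
      = (Ψ c - x t * Q c * star (x t)) + (Ψ (b - c) - x t * Q (b - c) * star (x t)) := by
    simp only [map_sub, mul_sub, sub_mul]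
    abel
  have h2 : ‖x t * Q (b - c) * star (x t)‖ = ‖Q (b - c)‖ := by
    rw [CStarRing.norm_mul_mem_unitary _ (Unitary.star_mem (hx t)),
      CStarRing.norm_mem_unitary_mul _ (hx t)]
  have h3 : ‖Q (b - c)‖ ≤ ‖b - c‖ := NonUnitalStarAlgHom.norm_apply_le Q _
  have h4 : ‖Ψ (b - c)‖ ≤ ‖b - c‖ := NonUnitalStarAlgHom.norm_apply_le Ψ _
  calc ‖Ψ b - x t * Q b * star (x t)‖
      ≤ ‖Ψ c - x t * Q c * star (x t)‖ + ‖Ψ (b - c) - x t * Q (b - c) * star (x t)‖ := by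
        rw [hsplit]; exact norm_add_le _ _
    _ ≤ ε/2 + (‖Ψ (b - c)‖ + ‖x t * Q (b - c) * star (x t)‖) :=
        add_le_add (ht c hcT) (norm_sub_le _ _)
    _ ≤ ε := by rw [h2]; linarith

end Aux

/-- If two cocycle morphisms between twisted actions on separable unital
C*-algebras are each asymptotically unitarily equivalent to a cocycle conjugacy, then so is
their composition. -/
theorem asympUEquiv_cocycleConjugacy_comp
    {G A B C : Type*} [Group G] [TopologicalSpace G] [IsTopologicalGroup G]
    [LocallyCompactSpace G] [SecondCountableTopology G] [T2Space G]
    [CStarAlgebra A] [CStarAlgebra B] [CStarAlgebra C]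
    [TopologicalSpace.SeparableSpace A] [TopologicalSpace.SeparableSpace B]
    [TopologicalSpace.SeparableSpace C]
    (Sα : TwistedAction G A) (Sβ : TwistedAction G B) (Sγ : TwistedAction G C)
    (P : CocycleMorphism Sα Sβ) (Q : CocycleMorphism Sβ Sγ)
    (hP : ∃ Φ : CocycleMorphism Sα Sβ, Function.Bijective Φ.φ ∧
      AsympUEquiv Sβ P.φ P.u Φ.φ Φ.u)
    (hQ : ∃ Ψ : CocycleMorphism Sβ Sγ, Function.Bijective Ψ.φ ∧
      AsympUEquiv Sγ Q.φ Q.u Ψ.φ Ψ.u) :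
    ∃ Θ : CocycleMorphism Sα Sγ, Function.Bijective Θ.φ ∧
      AsympUEquiv Sγ
        (fun a => Q.φ (P.φ a)) (fun g => plusMap Q.φ (P.u g) * Q.u g)
        Θ.φ Θ.u := by
  classical
  obtain ⟨Φ, hΦbij, w, hwc, hwm, hwpt, hwK⟩ := hP
  obtain ⟨Ψ, hΨbij, x, hxc, hxm, hxpt, hxK⟩ := hQ
  have hΦ1 : Φ.φ 1 = 1 := aux_map_one_of_bijective _ hΦbij
  have hΨ1 : Ψ.φ 1 = 1 := aux_map_one_of_bijective _ hΨbij
  have hΨw : ∀ t, Ψ.φ (w t) ∈ unitary C := fun t => aux_unitary_map Ψ.φ hΨ1 (hwm t)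
  -- `Q.φ` is unital
  have hQ1 : Q.φ 1 = 1 := by
    have heq : ∀ t, ‖Ψ.φ (1:B) - x t * Q.φ 1 * star (x t)‖ = ‖(1:C) - Q.φ 1‖ := by
      intro t
      have e : Ψ.φ (1:B) - x t * Q.φ 1 * star (x t) = x t * ((1:C) - Q.φ 1) * star (x t) := by
        rw [hΨ1, mul_sub, sub_mul, mul_one, (Unitary.mem_iff.mp (hxm t)).2]
      rw [e, CStarRing.norm_mul_mem_unitary _ (Unitary.star_mem (hxm t)),
        CStarRing.norm_mem_unitary_mul _ (hxm t)]
    have hconst : Filter.Tendsto (fun _ : ℝ => ‖(1:C) - Q.φ 1‖) Filter.atTop (nhds 0) :=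
      (hxpt 1).congr heq
    have h0 := tendsto_nhds_unique tendsto_const_nhds hconst
    rw [norm_eq_zero, sub_eq_zero] at h0
    exact h0.symm
  have hplus : ∀ b : B, plusMap Q.φ b = Q.φ b := fun b => by simp [plusMap, hQ1]
  have hΦplus : ∀ a : A, plusMap Φ.φ a = Φ.φ a := fun a => by simp [plusMap, hΦ1]
  have hΨplus : ∀ b : B, plusMap Ψ.φ b = Ψ.φ b := fun b => by simp [plusMap, hΨ1]
  have hΨcont : Continuous Ψ.φ :=
    AddMonoidHomClass.continuous_of_bound Ψ.φ 1
      (fun b => by simpa using NonUnitalStarAlgHom.norm_apply_le Ψ.φ b)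
  refine ⟨⟨Ψ.φ.comp Φ.φ, fun g => Ψ.φ (Φ.u g) * Ψ.u g, ?_, ?_, ?_, ?_⟩, ?_, ?_⟩
  · -- unitarity
    exact fun g => mul_mem (aux_unitary_map Ψ.φ hΨ1 (Φ.u_mem g)) (Ψ.u_mem g)
  · -- continuity
    exact (hΨcont.comp Φ.u_cont).mul Ψ.u_cont
  · -- equivariance
    intro g a
    simp only [NonUnitalStarAlgHom.comp_apply, star_mul]
    calc Ψ.φ (Φ.u g) * Ψ.u g * Sγ.α g (Ψ.φ (Φ.φ a)) * (star (Ψ.u g) * star (Ψ.φ (Φ.u g)))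
        = Ψ.φ (Φ.u g) * (Ψ.u g * Sγ.α g (Ψ.φ (Φ.φ a)) * star (Ψ.u g)) * star (Ψ.φ (Φ.u g)) := by
          simp only [mul_assoc]
      _ = Ψ.φ (Φ.u g) * Ψ.φ (Sβ.α g (Φ.φ a)) * star (Ψ.φ (Φ.u g)) := by
          rw [Ψ.equivariance g (Φ.φ a)]
      _ = Ψ.φ (Φ.u g * Sβ.α g (Φ.φ a) * star (Φ.u g)) := by
          rw [map_mul, map_mul, map_star]
      _ = Ψ.φ (Φ.φ (Sα.α g a)) := by rw [Φ.equivariance g a]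
  · -- cocycle identity
    intro g h
    have c0 : Φ.φ (Sα.u g h) = Φ.u g * Sβ.α g (Φ.u h) * Sβ.u g h * star (Φ.u (g*h)) := by
      rw [← hΦplus]; exact Φ.cocycle g h
    have c2 : Ψ.φ (Sβ.u g h) = Ψ.u g * Sγ.α g (Ψ.u h) * Sγ.u g h * star (Ψ.u (g*h)) := by
      rw [← hΨplus]; exact Ψ.cocycle g h
    have c1 : Ψ.φ (Sβ.α g (Φ.u h)) = Ψ.u g * Sγ.α g (Ψ.φ (Φ.u h)) * star (Ψ.u g) :=
      (Ψ.equivariance g (Φ.u h)).symm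
    have hpl : plusMap (Ψ.φ.comp Φ.φ) (Sα.u g h) = Ψ.φ (Φ.φ (Sα.u g h)) := by
      simp [plusMap, hΦ1, hΨ1]
    rw [hpl, c0]
    simp only [map_mul, map_star]
    rw [c1, c2]
    simp only [map_mul, star_mul, mul_assoc]
    rw [aux_unit_cancel (Ψ.u_mem g)]
  · -- bijectivity
    exact hΨbij.comp hΦbij
  · -- asymptotic unitary equivalence
    refine ⟨fun t => Ψ.φ (w t) * x t, (hΨcont.comp hwc).mul hxc,
      fun t => mul_mem (hΨw t) (hxm t), ?_, ?_⟩
    · -- pointwise part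
      intro a
      simp only [NonUnitalStarAlgHom.comp_apply]
      have key : ∀ t, ‖Ψ.φ (Φ.φ a) - Ψ.φ (w t) * x t * Q.φ (P.φ a) * star (Ψ.φ (w t) * x t)‖
          ≤ ‖Φ.φ a - w t * P.φ a * star (w t)‖
            + ‖Ψ.φ (P.φ a) - x t * Q.φ (P.φ a) * star (x t)‖ := by
        intro t
        have hsplit : Ψ.φ (Φ.φ a) - Ψ.φ (w t) * x t * Q.φ (P.φ a) * star (Ψ.φ (w t) * x t)
            = Ψ.φ (Φ.φ a - w t * P.φ a * star (w t))
              + Ψ.φ (w t) * (Ψ.φ (P.φ a) - x t * Q.φ (P.φ a) * star (x t)) * star (Ψ.φ (w t)) := by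
          simp only [map_sub, map_mul, map_star, star_mul, mul_sub, sub_mul, mul_assoc]
          abel
        rw [hsplit]
        refine (norm_add_le _ _).trans
          (add_le_add (NonUnitalStarAlgHom.norm_apply_le Ψ.φ _) (le_of_eq ?_))
        rw [CStarRing.norm_mul_mem_unitary _ (Unitary.star_mem (hΨw t)),
          CStarRing.norm_mem_unitary_mul _ (hΨw t)]
      refine squeeze_zero (fun t => norm_nonneg _) key ?_
      simpa using (hwpt a).add (hxpt (P.φ a))
    · -- uniform-on-compact part
      intro K hK ε hε
      have hS : IsCompact (P.u '' K) := hK.image P.u_cont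
      have E1 := hwK K hK (ε/3) (by linarith)
      have E2 := hxK K hK (ε/3) (by linarith)
      have E3 := aux_eventually_uniform Ψ.φ Q.φ x hxm hxpt hS (show (0:ℝ) < ε/3 by linarith)
      filter_upwards [E1, E2, E3] with t h1 h2 h3 g hg
      simp only [hplus]
      have hGW : Sγ.α g (Ψ.φ (w t)) ∈ unitary C := aux_unitary_map_equiv _ (hΨw t)
      have hGx : Sγ.α g (x t) ∈ unitary C := aux_unitary_map_equiv _ (hxm t)
      have s1 : ‖Ψ.φ (Φ.u g) * Ψ.u g
          - Ψ.φ (w t) * Ψ.φ (P.u g) * star (Ψ.φ (Sβ.α g (w t))) * Ψ.u g‖ ≤ ε/3 := by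
        have e : Ψ.φ (Φ.u g) * Ψ.u g
            - Ψ.φ (w t) * Ψ.φ (P.u g) * star (Ψ.φ (Sβ.α g (w t))) * Ψ.u g
            = Ψ.φ (Φ.u g - w t * P.u g * star (Sβ.α g (w t))) * Ψ.u g := by
          rw [map_sub, sub_mul, map_mul, map_mul, map_star]
        rw [e, CStarRing.norm_mul_mem_unitary _ (Ψ.u_mem g)]
        exact (NonUnitalStarAlgHom.norm_apply_le Ψ.φ _).trans (h1 g hg)
      have bridge : star (Ψ.φ (Sβ.α g (w t))) * Ψ.u g
          = Ψ.u g * star (Sγ.α g (Ψ.φ (w t))) := by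
        have e' : star (Ψ.φ (Sβ.α g (w t)))
            = Ψ.u g * star (Sγ.α g (Ψ.φ (w t))) * star (Ψ.u g) := by
          rw [← Ψ.equivariance g (w t)]
          simp only [star_mul, star_star, mul_assoc]
        rw [e', mul_assoc, (Unitary.mem_iff.mp (Ψ.u_mem g)).1, mul_one]
      have hM12 : Ψ.φ (w t) * Ψ.φ (P.u g) * star (Ψ.φ (Sβ.α g (w t))) * Ψ.u g
          = Ψ.φ (w t) * Ψ.φ (P.u g) * Ψ.u g * star (Sγ.α g (Ψ.φ (w t))) := by
        rw [mul_assoc (Ψ.φ (w t) * Ψ.φ (P.u g)), bridge, ← mul_assoc]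
      have s2 : ‖Ψ.φ (w t) * Ψ.φ (P.u g) * Ψ.u g * star (Sγ.α g (Ψ.φ (w t)))
          - Ψ.φ (w t) * Ψ.φ (P.u g) * (x t * Q.u g * star (Sγ.α g (x t)))
              * star (Sγ.α g (Ψ.φ (w t)))‖ ≤ ε/3 := by
        have e : Ψ.φ (w t) * Ψ.φ (P.u g) * Ψ.u g * star (Sγ.α g (Ψ.φ (w t)))
            - Ψ.φ (w t) * Ψ.φ (P.u g) * (x t * Q.u g * star (Sγ.α g (x t)))
              * star (Sγ.α g (Ψ.φ (w t)))
            = Ψ.φ (w t) * Ψ.φ (P.u g) * (Ψ.u g - x t * Q.u g * star (Sγ.α g (x t)))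
              * star (Sγ.α g (Ψ.φ (w t))) := by
          simp only [mul_sub, sub_mul, mul_assoc]
        have hWpb : Ψ.φ (w t) * Ψ.φ (P.u g) ∈ unitary C := by
          rw [← map_mul]
          exact aux_unitary_map Ψ.φ hΨ1 (mul_mem (hwm t) (P.u_mem g))
        rw [e, CStarRing.norm_mul_mem_unitary _ (Unitary.star_mem hGW),
          CStarRing.norm_mem_unitary_mul _ hWpb]
        exact h2 g hg
      have s3 : ‖Ψ.φ (w t) * Ψ.φ (P.u g) * (x t * Q.u g * star (Sγ.α g (x t)))
            * star (Sγ.α g (Ψ.φ (w t)))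
          - Ψ.φ (w t) * x t * (Q.φ (P.u g) * Q.u g)
            * star (Sγ.α g (Ψ.φ (w t) * x t))‖ ≤ ε/3 := by
        have e : Ψ.φ (w t) * Ψ.φ (P.u g) * (x t * Q.u g * star (Sγ.α g (x t)))
              * star (Sγ.α g (Ψ.φ (w t)))
            - Ψ.φ (w t) * x t * (Q.φ (P.u g) * Q.u g) * star (Sγ.α g (Ψ.φ (w t) * x t))
            = Ψ.φ (w t) * (Ψ.φ (P.u g) - x t * Q.φ (P.u g) * star (x t))
              * (x t * Q.u g * star (Sγ.α g (x t)) * star (Sγ.α g (Ψ.φ (w t)))) := by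
          simp only [map_mul, star_mul, mul_sub, sub_mul, mul_assoc]
          rw [aux_unit_cancel (hxm t)]
        have hR : x t * Q.u g * star (Sγ.α g (x t)) * star (Sγ.α g (Ψ.φ (w t))) ∈ unitary C :=
          mul_mem (mul_mem (mul_mem (hxm t) (Q.u_mem g)) (Unitary.star_mem hGx))
            (Unitary.star_mem hGW)
        rw [e, CStarRing.norm_mul_mem_unitary _ hR,
          CStarRing.norm_mem_unitary_mul _ (hΨw t)]
        exact h3 _ ⟨g, hg, rfl⟩
      have total : Ψ.φ (Φ.u g) * Ψ.u g
          - Ψ.φ (w t) * x t * (Q.φ (P.u g) * Q.u g) * star (Sγ.α g (Ψ.φ (w t) * x t))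
          = (Ψ.φ (Φ.u g) * Ψ.u g
              - Ψ.φ (w t) * Ψ.φ (P.u g) * star (Ψ.φ (Sβ.α g (w t))) * Ψ.u g)
            + ((Ψ.φ (w t) * Ψ.φ (P.u g) * Ψ.u g * star (Sγ.α g (Ψ.φ (w t)))
                - Ψ.φ (w t) * Ψ.φ (P.u g) * (x t * Q.u g * star (Sγ.α g (x t)))
                  * star (Sγ.α g (Ψ.φ (w t))))
              + (Ψ.φ (w t) * Ψ.φ (P.u g) * (x t * Q.u g * star (Sγ.α g (x t)))
                  * star (Sγ.α g (Ψ.φ (w t)))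
                - Ψ.φ (w t) * x t * (Q.φ (P.u g) * Q.u g)
                  * star (Sγ.α g (Ψ.φ (w t) * x t)))) := by
        rw [hM12]; abel
      rw [total]
      refine ((norm_add_le _ _).trans
        (add_le_add s1 ((norm_add_le _ _).trans (add_le_add s2 s3)))).trans (by linarith)
end
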